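/- Let m be a nonzero cube-free integer, let Q be a point of infinite order on E: y^2 = x^3 - 432m^2, let n ≥ 2, and let p ≥ 5 be a prime that is a primitive divisor of A_n (that is, p ∣ A_n and p ∤ A_k for all 1 ≤ k < n). Then p ∤ m (so p is a prime of good reduction for E), and the rank of apparition of p in the sequence (B_k) is 3n: p divides B_{3n} and p does not divide B_r for any 1 ≤ r < 3n. -/

import Mathlib

open WeierstrassCurve

/-- The Mordell curve `y² = x³ - 432·m²` as an affine Weierstrass curve over `ℚ`. -/
noncomputable def Mordell (m : ℤ) : WeierstrassCurve.Affine ℚ :=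
  { a₁ := 0, a₂ := 0, a₃ := 0, a₄ := 0, a₆ := -432 * (m : ℚ) ^ 2 }

/-- An integer is cube-free if the only cubes dividing it are units. -/
def CubeFree (m : ℤ) : Prop := ∀ d : ℤ, d ^ 3 ∣ m → IsUnit d

/-- `d` is a primitive divisor of the `n`-th term of the sequence `S`: `d > 1`, `d ∣ S n`,
and `d` is coprime to every earlier nonzero term. -/
def IsPrimitiveDivisor (S : ℕ → ℤ) (n : ℕ) (d : ℤ) : Prop :=
  1 < d ∧ d ∣ S n ∧ ∀ k : ℕ, 1 ≤ k → k < n → S k ≠ 0 → Int.gcd d (S k) = 1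

/-- The x-coordinate of an affine point (junk value `0` at the point at infinity). -/
noncomputable def xCoord {m : ℤ} : (Mordell m).Point → ℚ
  | .zero => 0
  | @WeierstrassCurve.Affine.Point.some _ _ _ x _ _ => x


set_option linter.unusedSectionVars false
set_option maxHeartbeats 1000000




namespace PDAux

variable {p : ℕ} [hp : Fact p.Prime]

/-- abbreviation for the p-adic valuation on ℚ -/
noncomputable def V (p : ℕ) (q : ℚ) : ℤ := padicValRat p q

lemma V_mul {q r : ℚ} (hq : q ≠ 0) (hr : r ≠ 0) : V p (q * r) = V p q + V p r :=
  padicValRat.mul hq hr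

lemma V_pow {q : ℚ} (hq : q ≠ 0) (k : ℕ) : V p (q ^ k) = k * V p q :=
  padicValRat.pow q

lemma V_neg (q : ℚ) : V p (-q) = V p q := padicValRat.neg q

lemma V_add_ge {q r : ℚ} (hqr : q + r ≠ 0) :
    min (V p q) (V p r) ≤ V p (q + r) := padicValRat.min_le_padicValRat_add hqr

lemma add_ne_zero_of_V_ne {q r : ℚ} (h : V p q ≠ V p r) : q + r ≠ 0 := by
  intro h0
  have hr : r = -q := by linarith [eq_neg_of_add_eq_zero_right h0]
  rw [hr, V_neg] at h
  exact h rfl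

lemma V_add_eq_left {q r : ℚ} (hq : q ≠ 0) (hr : r ≠ 0) (h : V p q < V p r) :
    V p (q + r) = V p q :=
  padicValRat.add_eq_of_lt (add_ne_zero_of_V_ne h.ne) hq hr h

lemma V_add_eq_right {q r : ℚ} (hq : q ≠ 0) (hr : r ≠ 0) (h : V p r < V p q) :
    V p (q + r) = V p r := by
  rw [add_comm]; exact V_add_eq_left hr hq h

lemma V_add_eq_min {q r : ℚ} (hq : q ≠ 0) (hr : r ≠ 0) (h : V p q ≠ V p r) :
    V p (q + r) = min (V p q) (V p r) := by
  rcases lt_or_gt_of_ne h with h' | h'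
  · rw [V_add_eq_left hq hr h', min_eq_left h'.le]
  · rw [V_add_eq_right hq hr h', min_eq_right h'.le]

lemma padicValInt_pos {z : ℤ} (hz : z ≠ 0) (h : (p : ℤ) ∣ z) : 1 ≤ padicValInt p z := by
  unfold padicValInt
  have hz' : z.natAbs ≠ 0 := Int.natAbs_ne_zero.mpr hz
  exact one_le_padicValNat_of_dvd hz'
    (Int.natCast_dvd_natCast.mp (Int.dvd_natAbs.mpr h))

lemma V_int_nonneg {z : ℤ} : 0 ≤ V p (z : ℚ) := by
  rcases eq_or_ne z 0 with rfl | hz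
  · simp [V, padicValRat]
  · rw [V, padicValRat.of_int]; exact_mod_cast Nat.zero_le _

lemma V_int_zero {z : ℤ} (h : ¬ (p : ℤ) ∣ z) : V p (z : ℚ) = 0 := by
  rw [V, padicValRat.of_int, padicValInt.eq_zero_of_not_dvd h]
  rfl

lemma V_int_pos {z : ℤ} (hz : z ≠ 0) (h : (p : ℤ) ∣ z) : 1 ≤ V p (z : ℚ) := by
  rw [V, padicValRat.of_int]
  exact_mod_cast padicValInt_pos hz h

lemma V_nat_zero {z : ℕ} (h : ¬ p ∣ z) : V p (z : ℚ) = 0 := by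
  have : ¬ (p : ℤ) ∣ (z : ℤ) := by exact_mod_cast h
  exact_mod_cast V_int_zero this

end PDAux

namespace PDAux2
open PDAux

variable {p : ℕ} [hp : Fact p.Prime] {c : ℚ} {x : ℕ → ℚ}

/-- small numerals have valuation 0 -/
lemma V_num {p : ℕ} [hp : Fact p.Prime] (hp5 : 5 ≤ p) (n : ℕ) (h1 : 0 < n) (h2 : n < 25)
    (h3 : ¬ 5 ∣ n) (h5 : ¬ 7 ∣ n) (h7 : ¬ 11 ∣ n) (h11 : ¬ 13 ∣ n) (h13 : ¬ 17 ∣ n)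
    (h17 : ¬ 19 ∣ n) (h19 : ¬ 23 ∣ n) : V p (n : ℚ) = 0 := by
  apply V_nat_zero
  intro hd
  have hle : p ≤ n := Nat.le_of_dvd h1 hd
  have hlt : p < 25 := lt_of_le_of_lt hle h2
  clear hle h1 h2
  interval_cases p <;> first
    | (exact absurd hp.out (by decide))
    | omega
    | (exact h3 hd) | (exact h5 hd) | (exact h7 hd) | (exact h11 hd)
    | (exact h13 hd) | (exact h17 hd) | (exact h19 hd)

structure Ctx (p : ℕ) (c : ℚ) (x : ℕ → ℚ) : Prop where
  hp5 : 5 ≤ p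
  hc : c ≠ 0
  hcv : 0 ≤ V p c
  hx0 : ∀ k, 1 ≤ k → x k ≠ 0
  hxne : ∀ ⦃k l : ℕ⦄, 1 ≤ l → l < k → x k ≠ x l
  hE1 : ∀ ⦃k l : ℕ⦄, 1 ≤ l → l < k →
    x (k+l) * x (k-l) * (x k - x l)^2 = (x k * x l)^2 - 4*c*(x k + x l)
  hE2 : ∀ ⦃k l : ℕ⦄, 1 ≤ l → l < k →
    (x (k+l) + x (k-l)) * (x k - x l)^2 = 2*((x k + x l)*(x k * x l) + 2*c)
  hE3 : ∀ ⦃k : ℕ⦄, 1 ≤ k → x (2*k) * (4*(x k^3 + c)) = x k * (x k^3 - 8*c)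
  hy2 : ∀ ⦃k : ℕ⦄, 1 ≤ k → x k^3 + c ≠ 0

namespace Ctx

lemma V2 (H : Ctx p c x) : V p (2 : ℚ) = 0 := by
  have := V_num (p := p) H.hp5 2 (by norm_num) (by norm_num) (by decide) (by decide) (by decide)
    (by decide) (by decide) (by decide) (by decide)
  simpa using this

lemma V3 (H : Ctx p c x) : V p (3 : ℚ) = 0 := by
  have := V_num (p := p) H.hp5 3 (by norm_num) (by norm_num) (by decide) (by decide) (by decide)
    (by decide) (by decide) (by decide) (by decide)
  simpa using this

lemma V4 (H : Ctx p c x) : V p (4 : ℚ) = 0 := by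
  have := V_num (p := p) H.hp5 4 (by norm_num) (by norm_num) (by decide) (by decide) (by decide)
    (by decide) (by decide) (by decide) (by decide)
  simpa using this

lemma V8 (H : Ctx p c x) : V p (8 : ℚ) = 0 := by
  have := V_num (p := p) H.hp5 8 (by norm_num) (by norm_num) (by decide) (by decide) (by decide)
    (by decide) (by decide) (by decide) (by decide)
  simpa using this

lemma V9 (H : Ctx p c x) : V p (9 : ℚ) = 0 := by
  have := V_num (p := p) H.hp5 9 (by norm_num) (by norm_num) (by decide) (by decide) (by decide)
    (by decide) (by decide) (by decide) (by decide)
  simpa using this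

end Ctx
end PDAux2

namespace PDAux2
open PDAux
variable {p : ℕ} [hp : Fact p.Prime] {c : ℚ} {x : ℕ → ℚ}
namespace Ctx

lemma Vsub_ge {q r : ℚ} (h : q - r ≠ 0) :
    min (V p q) (V p r) ≤ V p (q - r) := by
  have := V_add_ge (p := p) (q := q) (r := -r) (by rwa [← sub_eq_add_neg])
  rwa [V_neg, ← sub_eq_add_neg] at this

lemma Vsub_eq_left {q r : ℚ} (hq : q ≠ 0) (hr : r ≠ 0)
    (h : V p q < V p r) : V p (q - r) = V p q := by
  rw [sub_eq_add_neg]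
  exact V_add_eq_left hq (neg_ne_zero.mpr hr) (by rwa [V_neg])

lemma Vsub_eq_right {q r : ℚ} (hq : q ≠ 0) (hr : r ≠ 0)
    (h : V p r < V p q) : V p (q - r) = V p r := by
  rw [sub_eq_add_neg]
  rw [V_add_eq_right hq (neg_ne_zero.mpr hr) (by rwa [V_neg]), V_neg]

lemma sub_ne_zero_of_V_ne {q r : ℚ} (h : V p q ≠ V p r) : q - r ≠ 0 := by
  rw [sub_eq_add_neg]
  exact add_ne_zero_of_V_ne (p := p) (by rwa [V_neg])

/-- Claim A: indices whose point is in the kernel of reduction are closed under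
addition and subtraction. -/
lemma claimA (H : Ctx p c x) {k l : ℕ} (hl : 1 ≤ l) (hlk : l < k)
    (hk : V p (x k) < 0) (hl' : V p (x l) < 0) :
    V p (x (k+l)) < 0 ∧ V p (x (k-l)) < 0 := by
  have hk1 : 1 ≤ k := le_trans hl hlk.le
  have hxk := H.hx0 k hk1
  have hxl := H.hx0 l hl
  have hxp := H.hx0 (k+l) (by omega)
  have hxm := H.hx0 (k-l) (by omega)
  set u₁ := V p (x k) with hu₁
  set u₂ := V p (x l) with hu₂
  set α := V p (x (k+l)) with hα
  set β := V p (x (k-l)) with hβ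
  have hd : x k - x l ≠ 0 := sub_ne_zero.mpr (H.hxne hl hlk)
  have hdv : min u₁ u₂ ≤ V p (x k - x l) := Vsub_ge hd
  set e := V p (x k - x l) with he
  have hq : x k * x l ≠ 0 := mul_ne_zero hxk hxl
  have hqv : V p (x k * x l) = u₁ + u₂ := V_mul hxk hxl
  have hq2 : (x k * x l)^2 ≠ 0 := pow_ne_zero _ hq
  have hq2v : V p ((x k * x l)^2) = 2*(u₁+u₂) := by
    rw [V_pow hq 2, hqv]; ring
  have hcv := H.hcv
  -- num1 = q^2 - 4c*s has valuation 2(u₁+u₂)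
  have hnum1 : ((x k * x l)^2 - 4*c*(x k + x l)) ≠ 0 ∧
      V p ((x k * x l)^2 - 4*c*(x k + x l)) = 2*(u₁+u₂) := by
    rcases eq_or_ne (x k + x l) 0 with hs | hs
    · rw [hs, mul_zero, sub_zero]; exact ⟨hq2, hq2v⟩
    · have h4c : (4:ℚ)*c ≠ 0 := mul_ne_zero (by norm_num) H.hc
      have h4cs : 4*c*(x k + x l) ≠ 0 := mul_ne_zero h4c hs
      have hsv : min u₁ u₂ ≤ V p (x k + x l) := V_add_ge hs
      have h4csv : V p (4*c*(x k + x l)) = V p c + V p (x k + x l) := by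
        rw [V_mul h4c hs, V_mul (by norm_num : (4:ℚ) ≠ 0) H.hc, H.V4, zero_add]
      have hlt : V p ((x k * x l)^2) < V p (4*c*(x k + x l)) := by
        rw [hq2v, h4csv]; omega
      exact ⟨sub_ne_zero_of_V_ne hlt.ne, by rw [Vsub_eq_left hq2 h4cs hlt, hq2v]⟩
  -- E1 : α + β + 2e = 2(u₁+u₂)
  have e1 := H.hE1 hl hlk
  have hE1v : α + β + 2*e = 2*(u₁+u₂) := by
    have hdlhs : V p (x (k+l) * x (k-l) * (x k - x l)^2) = α + β + 2*e := by
      rw [V_mul (mul_ne_zero hxp hxm) (pow_ne_zero _ hd), V_mul hxp hxm, V_pow hd 2]; ring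
    rw [← hnum1.2, ← e1, hdlhs]
  by_contra hcontra
  rw [not_and_or, not_lt, not_lt] at hcontra
  have e2 := H.hE2 hl hlk
  rcases eq_or_ne (x (k+l) + x (k-l)) 0 with hsum | hsum
  · -- then α = β
    have hαβ : α = β := by
      have hx' : x (k+l) = -(x (k-l)) := eq_neg_of_add_eq_zero_left hsum
      rw [hα, hx', V_neg]
    rcases hcontra with h | h <;> omega
  · -- bound V(sum) + 2e from below
    have hin : (x k + x l) * (x k * x l) + 2*c ≠ 0 := by
      intro h0
      apply hsum
      have h1 : (x (k+l) + x (k-l)) * (x k - x l)^2 = 0 := by rw [e2, h0, mul_zero]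
      exact (mul_eq_zero.mp h1).resolve_right (pow_ne_zero _ hd)
    have hVsum2e : min (min u₁ u₂ + (u₁ + u₂)) 0 ≤ V p (x (k+l) + x (k-l)) + 2*e := by
      have hlhs : V p ((x (k+l) + x (k-l)) * (x k - x l)^2)
          = V p (x (k+l) + x (k-l)) + 2*e := by
        rw [V_mul hsum (pow_ne_zero _ hd), V_pow hd 2]; ring
      have hrhs : V p (2*((x k + x l) * (x k * x l) + 2*c))
          = V p ((x k + x l) * (x k * x l) + 2*c) := by
        rw [V_mul (by norm_num : (2:ℚ) ≠ 0) hin, H.V2, zero_add]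
      have hbound : min (min u₁ u₂ + (u₁ + u₂)) 0 ≤ V p ((x k + x l) * (x k * x l) + 2*c) := by
        have h2c : (2:ℚ)*c ≠ 0 := mul_ne_zero (by norm_num) H.hc
        have h2cv : V p ((2:ℚ)*c) = V p c := by
          rw [V_mul (by norm_num : (2:ℚ) ≠ 0) H.hc, H.V2, zero_add]
        rcases eq_or_ne (x k + x l) 0 with hs0 | hs0
        · rw [hs0, zero_mul, zero_add, h2cv]; omega
        · have hsq : (x k + x l) * (x k * x l) ≠ 0 := mul_ne_zero hs0 hq
          have hge := V_add_ge (p := p) (q := (x k + x l) * (x k * x l)) (r := 2*c) hin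
          have h1 : V p ((x k + x l)*(x k * x l)) = V p (x k + x l) + (u₁ + u₂) := by
            rw [V_mul hs0 hq, hqv]
          have h3 : min u₁ u₂ ≤ V p (x k + x l) := V_add_ge hs0
          rw [h1, h2cv] at hge
          omega
      rw [← hlhs, e2, hrhs]
      exact hbound
    rcases eq_or_ne α β with hab | hab
    · rcases hcontra with h | h <;> omega
    · have hminv : V p (x (k+l) + x (k-l)) = min α β := V_add_eq_min hxp hxm hab
      rcases hcontra with h | h <;> omega

/-- doubling preserves negativity of the valuation -/
lemma dblneg (H : Ctx p c x) {k : ℕ} (hk1 : 1 ≤ k) (hk : V p (x k) < 0) :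
    V p (x (2*k)) < 0 := by
  have hxk := H.hx0 k hk1
  have hx2k := H.hx0 (2*k) (by omega)
  have hcv := H.hcv
  set u := V p (x k) with hu
  have hx3 : x k^3 ≠ 0 := pow_ne_zero _ hxk
  have hx3v : V p (x k^3) = 3*u := by rw [V_pow hxk 3]; ring
  have h8c : (8:ℚ)*c ≠ 0 := mul_ne_zero (by norm_num) H.hc
  have h8cv : V p ((8:ℚ)*c) = V p c := by
    rw [V_mul (by norm_num : (8:ℚ) ≠ 0) H.hc, H.V8, zero_add]
  have hy2 := H.hy2 hk1
  have hplus : V p (x k^3 + c) = 3*u := by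
    rw [V_add_eq_left hx3 H.hc (by omega), hx3v]
  have hminus : V p (x k^3 - 8*c) = 3*u := by
    rw [Vsub_eq_left hx3 h8c (by rw [hx3v, h8cv]; omega), hx3v]
  have hm0 : x k^3 - 8*c ≠ 0 := sub_ne_zero_of_V_ne (by rw [hx3v, h8cv]; omega)
  have e3 := H.hE3 hk1
  have hL : V p (x (2*k) * (4*(x k^3 + c))) = V p (x (2*k)) + 3*u := by
    rw [V_mul hx2k (mul_ne_zero (by norm_num) hy2),
      V_mul (by norm_num : (4:ℚ) ≠ 0) hy2, H.V4, hplus]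
    ring
  have hR : V p (x k * (x k^3 - 8*c)) = u + 3*u := by rw [V_mul hxk hm0, hminus]
  have : V p (x (2*k)) + 3*u = u + 3*u := by rw [← hL, e3, hR]
  omega

lemma Dmult (H : Ctx p c x) {N : ℕ} (hN : 1 ≤ N) (hD : V p (x N) < 0) :
    ∀ j, 1 ≤ j → V p (x (j*N)) < 0 := by
  intro j
  induction j with
  | zero => omega
  | succ j ih =>
    intro _
    rcases Nat.lt_or_ge j 1 with hj | hj
    · have : j = 0 := by omega
      subst this; simpa using hD
    · have hjN := ih hj
      rcases eq_or_ne j 1 with rfl | hj2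
      · have : (1+1)*N = 2*N := by ring
        rw [this]
        exact H.dblneg hN hD
      · have hlt : N < j*N := by
          have h2 : 2*N ≤ j*N := Nat.mul_le_mul (by omega) (le_refl N)
          omega
        have := (H.claimA hN hlt hjN hD).1
        have heq : (j+1)*N = j*N + N := by ring
        rwa [heq]

lemma Ddvd (H : Ctx p c x) {N : ℕ} (hN1 : 1 ≤ N)
    (hmin : ∀ k, 1 ≤ k → k < N → ¬ V p (x k) < 0) (hND : V p (x N) < 0) :
    ∀ r, 1 ≤ r → V p (x r) < 0 → N ∣ r := by
  intro r
  induction r using Nat.strong_induction_on with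
  | _ r ih =>
    intro hr1 hrD
    rcases lt_trichotomy r N with h | h | h
    · exact absurd hrD (hmin r hr1 h)
    · exact h ▸ dvd_refl N
    · have hsub : V p (x (r - N)) < 0 := (H.claimA hN1 h hrD hND).2
      have hdvd := ih (r - N) (by omega) (by omega) hsub
      obtain ⟨t, ht⟩ := hdvd
      exact ⟨t+1, by rw [Nat.mul_add, Nat.mul_one, ← ht]; omega⟩

end Ctx
end PDAux2

namespace PDAux2
open PDAux
variable {p : ℕ} [hp : Fact p.Prime] {c : ℚ} {x : ℕ → ℚ}
namespace Ctx

lemma Vneg3 (H : Ctx p c x) : V p ((-3:ℚ)) = 0 := by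
  rw [show ((-3:ℚ)) = -(3:ℚ) by norm_num, V_neg, H.V3]

lemma V5nonneg (H : Ctx p c x) : 0 ≤ V p ((5:ℚ)) := by
  rw [show ((5:ℚ)) = (((5:ℤ)):ℚ) by norm_num]
  exact V_int_nonneg

/-- `x(2k)` has the same (positive) valuation as `x k`, and `3k` lands in the kernel
with valuation `-2t`. -/
lemma triple (H : Ctx p c x) (hVc : V p c = 0) {k : ℕ} (hk1 : 1 ≤ k)
    (ht : 1 ≤ V p (x k)) : V p (x (3*k)) = -2 * V p (x k) := by
  have hxk := H.hx0 k hk1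
  have hx2k := H.hx0 (2*k) (by omega)
  have hx3k := H.hx0 (3*k) (by omega)
  set t := V p (x k) with htdef
  have hx3 : x k^3 ≠ 0 := pow_ne_zero _ hxk
  have hx3v : V p (x k^3) = 3*t := by rw [V_pow hxk 3]; ring
  have h4c : (4:ℚ)*c ≠ 0 := mul_ne_zero (by norm_num) H.hc
  have h4cv : V p ((4:ℚ)*c) = 0 := by
    rw [V_mul (by norm_num : (4:ℚ) ≠ 0) H.hc, H.V4, hVc]
    ring
  have h8c : (8:ℚ)*c ≠ 0 := mul_ne_zero (by norm_num) H.hc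
  have h8cv : V p ((8:ℚ)*c) = 0 := by
    rw [V_mul (by norm_num : (8:ℚ) ≠ 0) H.hc, H.V8, hVc]
    ring
  have hy2 := H.hy2 hk1
  have hplus : V p (x k^3 + c) = 0 := by
    rw [V_add_eq_right hx3 H.hc (by omega), hVc]
  have hminus0 : x k^3 - 8*c ≠ 0 := sub_ne_zero_of_V_ne (by rw [hx3v, h8cv]; omega)
  have hminus : V p (x k^3 - 8*c) = 0 := by
    rw [Vsub_eq_right hx3 h8c (by rw [hx3v, h8cv]; omega), h8cv]
  -- V (x 2k) = t
  have e3 := H.hE3 hk1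
  have hV2k : V p (x (2*k)) = t := by
    have hL : V p (x (2*k) * (4*(x k^3 + c))) = V p (x (2*k)) := by
      rw [V_mul hx2k (mul_ne_zero (by norm_num) hy2),
        V_mul (by norm_num : (4:ℚ) ≠ 0) hy2, H.V4, hplus]
      ring
    have hR : V p (x k * (x k^3 - 8*c)) = t := by rw [V_mul hxk hminus0, hminus]; ring
    rw [← hL, e3, hR]
  -- the difference d = x(2k) - x(k)
  have hd : x (2*k) - x k ≠ 0 := sub_ne_zero.mpr (H.hxne hk1 (by omega))
  have hplus4 : V p (x k^3 + 4*c) = 0 := by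
    rw [V_add_eq_right hx3 h4c (by omega)]
    exact h4cv
  have hplus40 : x k^3 + 4*c ≠ 0 := add_ne_zero_of_V_ne (p := p) (by rw [hx3v, h4cv]; omega)
  have dkey : (x (2*k) - x k) * (4*(x k^3 + c)) = -3 * x k * (x k^3 + 4*c) := by
    linear_combination H.hE3 hk1
  have hdv : V p (x (2*k) - x k) = t := by
    have hL : V p ((x (2*k) - x k) * (4*(x k^3 + c))) = V p (x (2*k) - x k) := by
      rw [V_mul hd (mul_ne_zero (by norm_num) hy2),
        V_mul (by norm_num : (4:ℚ) ≠ 0) hy2, H.V4, hplus]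
      ring
    have hR : V p (-3 * x k * (x k^3 + 4*c)) = t := by
      rw [V_mul (mul_ne_zero (by norm_num) hxk) hplus40,
        V_mul (by norm_num : (-3:ℚ) ≠ 0) hxk, H.Vneg3, hplus4]
      ring
    rw [← hL, dkey, hR]
  -- the sum s = x(2k) + x(k)
  have h5x : (5:ℚ) * x k^3 ≠ 0 := mul_ne_zero (by norm_num) hx3
  have h5xv : 1 ≤ V p ((5:ℚ) * x k^3) := by
    have := H.V5nonneg
    rw [V_mul (by norm_num : (5:ℚ) ≠ 0) hx3, hx3v]
    omega
  have h5m0 : 5*x k^3 - 4*c ≠ 0 := sub_ne_zero_of_V_ne (by rw [h4cv]; omega)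
  have h5mv : V p (5*x k^3 - 4*c) = 0 := by
    rw [Vsub_eq_right h5x h4c (by rw [h4cv]; omega), h4cv]
  have skey : (x (2*k) + x k) * (4*(x k^3 + c)) = x k * (5*x k^3 - 4*c) := by
    linear_combination H.hE3 hk1
  have hs : x (2*k) + x k ≠ 0 := by
    intro h0
    have : x k * (5*x k^3 - 4*c) = 0 := by rw [← skey, h0, zero_mul]
    exact (mul_ne_zero hxk h5m0) this
  have hsv : V p (x (2*k) + x k) = t := by
    have hL : V p ((x (2*k) + x k) * (4*(x k^3 + c))) = V p (x (2*k) + x k) := by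
      rw [V_mul hs (mul_ne_zero (by norm_num) hy2),
        V_mul (by norm_num : (4:ℚ) ≠ 0) hy2, H.V4, hplus]
      ring
    have hR : V p (x k * (5*x k^3 - 4*c)) = t := by rw [V_mul hxk h5m0, h5mv]; ring
    rw [← hL, skey, hR]
  -- now E1 at (2k, k)
  have e1 := H.hE1 (k := 2*k) (l := k) hk1 (by omega)
  rw [show 2*k + k = 3*k by ring, show 2*k - k = k by omega] at e1
  have hq : x (2*k) * x k ≠ 0 := mul_ne_zero hx2k hxk
  have hqv : V p (x (2*k) * x k) = 2*t := by rw [V_mul hx2k hxk, hV2k]; ring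
  have hq2 : (x (2*k) * x k)^2 ≠ 0 := pow_ne_zero _ hq
  have hq2v : V p ((x (2*k) * x k)^2) = 4*t := by rw [V_pow hq 2, hqv]; ring
  have h4cs : 4*c*(x (2*k) + x k) ≠ 0 := mul_ne_zero h4c hs
  have h4csv : V p (4*c*(x (2*k) + x k)) = t := by rw [V_mul h4c hs, h4cv, hsv]; ring
  have hnum0 : (x (2*k) * x k)^2 - 4*c*(x (2*k) + x k) ≠ 0 :=
    sub_ne_zero_of_V_ne (by rw [hq2v, h4csv]; omega)
  have hnumv : V p ((x (2*k) * x k)^2 - 4*c*(x (2*k) + x k)) = t := by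
    rw [Vsub_eq_right hq2 h4cs (by rw [hq2v, h4csv]; omega), h4csv]
  have hL : V p (x (3*k) * x k * (x (2*k) - x k)^2) = V p (x (3*k)) + t + 2*t := by
    rw [V_mul (mul_ne_zero hx3k hxk) (pow_ne_zero _ hd), V_mul hx3k hxk, V_pow hd 2, hdv]
    ring
  have : V p (x (3*k)) + t + 2*t = t := by rw [← hL, e1, hnumv]
  omega

/-- part (a): a prime of bad reduction dividing `A n` forces `p | A 1` -/
lemma parta (H : Ctx p c x) (hVc2 : 2 ≤ V p c) {n : ℕ} (hn : 2 ≤ n)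
    (h1 : V p (x 1) = 0) (hn1 : V p (x (n-1)) ≤ 0) (hnt : 1 ≤ V p (x n)) : False := by
  have hxn := H.hx0 n (by omega)
  have hx1 := H.hx0 1 (le_refl 1)
  have hxp := H.hx0 (n+1) (by omega)
  have hxm := H.hx0 (n-1) (by omega)
  set t := V p (x n) with htdef
  set α := V p (x (n+1)) with hα
  set β := V p (x (n-1)) with hβ
  have e1 := H.hE1 (k := n) (l := 1) (le_refl 1) (by omega)
  have e2 := H.hE2 (k := n) (l := 1) (le_refl 1) (by omega)
  have hd : x n - x 1 ≠ 0 := sub_ne_zero.mpr (H.hxne (le_refl 1) (by omega))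
  have hdv : V p (x n - x 1) = 0 := by
    rw [Vsub_eq_right hxn hx1 (by omega), h1]
  have hs : x n + x 1 ≠ 0 := add_ne_zero_of_V_ne (p := p) (by omega)
  have hsv : V p (x n + x 1) = 0 := by
    rw [V_add_eq_right hxn hx1 (by omega), h1]
  have hq : x n * x 1 ≠ 0 := mul_ne_zero hxn hx1
  have hqv : V p (x n * x 1) = t := by rw [V_mul hxn hx1, h1]; ring
  have hq2 : (x n * x 1)^2 ≠ 0 := pow_ne_zero _ hq
  have hq2v : V p ((x n * x 1)^2) = 2*t := by rw [V_pow hq 2, hqv]; ring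
  have h4c : (4:ℚ)*c ≠ 0 := mul_ne_zero (by norm_num) H.hc
  have h4cv : V p ((4:ℚ)*c) = V p c := by
    rw [V_mul (by norm_num : (4:ℚ) ≠ 0) H.hc, H.V4, zero_add]
  have h4cs : 4*c*(x n + x 1) ≠ 0 := mul_ne_zero h4c hs
  have h4csv : V p (4*c*(x n + x 1)) = V p c := by rw [V_mul h4c hs, h4cv, hsv]; ring
  -- num1 is nonzero since it equals the product
  have hnum0 : (x n * x 1)^2 - 4*c*(x n + x 1) ≠ 0 := by
    rw [← e1]
    exact mul_ne_zero (mul_ne_zero hxp hxm) (pow_ne_zero _ hd)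
  have hnumv : 2 ≤ V p ((x n * x 1)^2 - 4*c*(x n + x 1)) := by
    have := Vsub_ge (p := p) (q := (x n * x 1)^2) (r := 4*c*(x n + x 1)) hnum0
    rw [hq2v, h4csv] at this
    omega
  have hE1v : α + β = V p ((x n * x 1)^2 - 4*c*(x n + x 1)) := by
    have hL : V p (x (n+1) * x (n-1) * (x n - x 1)^2) = α + β := by
      rw [V_mul (mul_ne_zero hxp hxm) (pow_ne_zero _ hd), V_mul hxp hxm, V_pow hd 2, hdv]
      ring
    rw [← hL, e1]
  have hαge : 2 ≤ α := by omega
  rcases eq_or_ne (x (n+1) + x (n-1)) 0 with hsum | hsum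
  · have hαβ : α = β := by
      have hx' : x (n+1) = -(x (n-1)) := eq_neg_of_add_eq_zero_left hsum
      rw [hα, hx', V_neg]
    omega
  · have hin : (x n + x 1) * (x n * x 1) + 2*c ≠ 0 := by
      intro h0
      apply hsum
      have h1' : (x (n+1) + x (n-1)) * (x n - x 1)^2 = 0 := by rw [e2, h0, mul_zero]
      exact (mul_eq_zero.mp h1').resolve_right (pow_ne_zero _ hd)
    have hsq : (x n + x 1) * (x n * x 1) ≠ 0 := mul_ne_zero hs hq
    have hsqv : V p ((x n + x 1) * (x n * x 1)) = t := by rw [V_mul hs hq, hsv, hqv]; ring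
    have h2c : (2:ℚ)*c ≠ 0 := mul_ne_zero (by norm_num) H.hc
    have h2cv : V p ((2:ℚ)*c) = V p c := by
      rw [V_mul (by norm_num : (2:ℚ) ≠ 0) H.hc, H.V2, zero_add]
    have hinv : 1 ≤ V p ((x n + x 1) * (x n * x 1) + 2*c) := by
      have := V_add_ge (p := p) (q := (x n + x 1) * (x n * x 1)) (r := 2*c) hin
      rw [hsqv, h2cv] at this
      omega
    have hsumv : V p (x (n+1) + x (n-1)) = β := by
      rw [add_comm]
      rw [V_add_eq_left hxm hxp (by omega)]
    have hL : V p ((x (n+1) + x (n-1)) * (x n - x 1)^2) = β := by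
      rw [V_mul hsum (pow_ne_zero _ hd), V_pow hd 2, hdv, hsumv]
      ring
    have hR : V p (2*((x n + x 1) * (x n * x 1) + 2*c))
        = V p ((x n + x 1) * (x n * x 1) + 2*c) := by
      rw [V_mul (by norm_num : (2:ℚ) ≠ 0) hin, H.V2, zero_add]
    have : β = V p ((x n + x 1) * (x n * x 1) + 2*c) := by rw [← hL, e2, hR]
    omega

end Ctx
end PDAux2

namespace PDAux2
open PDAux
variable {p : ℕ} [hp : Fact p.Prime] {c : ℚ} {x : ℕ → ℚ}

/-- `r` is zero or has valuation at least `a` -/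
def Vge (p : ℕ) (a : ℤ) (r : ℚ) : Prop := r = 0 ∨ a ≤ V p r

namespace Vge

lemma of_V {a : ℤ} {r : ℚ} (h : a ≤ V p r) : Vge p a r := Or.inr h

lemma zero (a : ℤ) : Vge p a (0 : ℚ) := Or.inl rfl

lemma weaken {a b : ℤ} {r : ℚ} (hab : a ≤ b) (h : Vge p b r) : Vge p a r := by
  rcases h with h | h
  · exact Or.inl h
  · exact Or.inr (le_trans hab h)

lemma add {a : ℤ} {q r : ℚ} (hq : Vge p a q) (hr : Vge p a r) : Vge p a (q + r) := by
  rcases hq with rfl | hq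
  · simpa using hr
  rcases hr with rfl | hr
  · simp only [add_zero]; exact Or.inr hq
  rcases eq_or_ne (q + r) 0 with h0 | h0
  · exact Or.inl h0
  · refine Or.inr ?_
    have := V_add_ge (p := p) h0
    omega

lemma sub {a : ℤ} {q r : ℚ} (hq : Vge p a q) (hr : Vge p a r) : Vge p a (q - r) := by
  rw [sub_eq_add_neg]
  refine add hq ?_
  rcases hr with rfl | hr
  · simpa using zero a
  · exact Or.inr (by rwa [V_neg])

lemma mul {a b : ℤ} {q r : ℚ} (hq : Vge p a q) (hr : Vge p b r) : Vge p (a+b) (q * r) := by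
  rcases hq with rfl | hq
  · exact Or.inl (zero_mul r)
  rcases hr with rfl | hr
  · exact Or.inl (mul_zero q)
  rcases eq_or_ne q 0 with rfl | hq0
  · exact Or.inl (zero_mul r)
  rcases eq_or_ne r 0 with rfl | hr0
  · exact Or.inl (mul_zero q)
  refine Or.inr ?_
  rw [V_mul hq0 hr0]
  omega

end Vge

/-- adding a strictly smaller-valuation perturbation keeps the valuation -/
lemma V_add_main {a : ℤ} {main rest : ℚ} (hm : main ≠ 0) (hv : V p main = a)
    (hr : Vge p (a+1) rest) : main + rest ≠ 0 ∧ V p (main + rest) = a := by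
  rcases hr with rfl | hr
  · simpa [hm] using hv
  rcases eq_or_ne rest 0 with rfl | hr0
  · simpa [hm] using hv
  have hlt : V p main < V p rest := by omega
  exact ⟨add_ne_zero_of_V_ne (p := p) (by omega), by rw [V_add_eq_left hm hr0 hlt, hv]⟩

end PDAux2

namespace PDAux2
open PDAux
variable {p : ℕ} [hp : Fact p.Prime] {c : ℚ} {x : ℕ → ℚ}

/-- the induction invariant for claim C: the point at index `j*g` is either in the
kernel of reduction, or reduces to the same x-coordinate as the point at `g`. -/
def Rp (p : ℕ) (x : ℕ → ℚ) (g j : ℕ) : Prop :=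
  V p (x (j*g)) < 0 ∨
    (V p (x (j*g)) = 0 ∧ (x (j*g) - x g = 0 ∨ 1 ≤ V p (x (j*g) - x g)))

lemma V_zero_rat : V p (0 : ℚ) = 0 := padicValRat.zero

lemma ne_zero_of_one_le_V {r : ℚ} (h : 1 ≤ V p r) : r ≠ 0 := by
  intro h0
  rw [h0, V_zero_rat] at h
  omega

namespace Ctx

lemma stepC (H : Ctx p c x) (hVc : V p c = 0) {g : ℕ} (hg1 : 1 ≤ g)
    (hg0 : V p (x g) = 0)
    (hm80 : x g^3 - 8*c ≠ 0) (hm8v : V p (x g^3 - 8*c) = 0)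
    (hy0 : V p (x g^3 + c) = 0)
    (h4cg0 : x g^3 + 4*c ≠ 0) (h4cg : 1 ≤ V p (x g^3 + 4*c))
    {j : ℕ} (hj : 1 ≤ j) (Rm : Rp p x g j) (R0 : Rp p x g (j+1)) :
    Rp p x g (j+2) := by
  have hxg := H.hx0 g hg1
  have hxK := H.hx0 ((j+1)*g) (by have : 0 < (j+1)*g := Nat.mul_pos (by omega) (by omega); omega)
  have hxp := H.hx0 ((j+2)*g) (by have : 0 < (j+2)*g := Nat.mul_pos (by omega) (by omega); omega)
  have hxm := H.hx0 (j*g) (by have : 0 < j*g := Nat.mul_pos (by omega) (by omega); omega)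
  have hKg : g < (j+1)*g := by
    have h2 : 2*g ≤ (j+1)*g := Nat.mul_le_mul (by omega) (le_refl g)
    omega
  have e1 := H.hE1 (k := (j+1)*g) (l := g) hg1 hKg
  have e2 := H.hE2 (k := (j+1)*g) (l := g) hg1 hKg
  have hip : (j+1)*g + g = (j+2)*g := by ring
  have him : (j+1)*g - g = j*g := by
    have h' : (j+1)*g = j*g + g := by ring
    omega
  rw [hip, him] at e1 e2
  have hd : x ((j+1)*g) - x g ≠ 0 := sub_ne_zero.mpr (H.hxne hg1 hKg)
  have h4c : (4:ℚ)*c ≠ 0 := mul_ne_zero (by norm_num) H.hc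
  have h4cv : V p ((4:ℚ)*c) = 0 := by
    rw [V_mul (by norm_num : (4:ℚ) ≠ 0) H.hc, H.V4, hVc]; ring
  have h2G : (2:ℚ)*x g ≠ 0 := mul_ne_zero (by norm_num) hxg
  have h2Gv : V p ((2:ℚ)*x g) = 0 := by
    rw [V_mul (by norm_num : (2:ℚ) ≠ 0) hxg, H.V2, hg0]; ring
  set u := V p (x ((j+1)*g)) with hu
  set α := V p (x ((j+2)*g)) with hαdef
  set β := V p (x (j*g)) with hβdef
  rcases R0 with huneg | ⟨hu0, hdiff⟩
  · -- CASE A : u < 0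
    have hδv : V p (x ((j+1)*g) - x g) = u := by
      rw [Vsub_eq_left hxK hxg (by omega)]
    have hs0 : x ((j+1)*g) + x g ≠ 0 := add_ne_zero_of_V_ne (p := p) (by omega)
    have hsv : V p (x ((j+1)*g) + x g) = u := V_add_eq_left hxK hxg (by omega)
    have hq : x ((j+1)*g) * x g ≠ 0 := mul_ne_zero hxK hxg
    have hqv : V p (x ((j+1)*g) * x g) = u := by rw [V_mul hxK hxg, hg0]; ring
    have hq2 : (x ((j+1)*g) * x g)^2 ≠ 0 := pow_ne_zero _ hq
    have hq2v : V p ((x ((j+1)*g) * x g)^2) = 2*u := by rw [V_pow hq 2, hqv]; push_cast; ring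
    have h4cs : 4*c*(x ((j+1)*g) + x g) ≠ 0 := mul_ne_zero h4c hs0
    have h4csv : V p (4*c*(x ((j+1)*g) + x g)) = u := by
      rw [V_mul h4c hs0, h4cv, hsv]; ring
    have hnum10 : (x ((j+1)*g) * x g)^2 - 4*c*(x ((j+1)*g) + x g) ≠ 0 :=
      sub_ne_zero_of_V_ne (by rw [hq2v, h4csv]; omega)
    have hnum1v : V p ((x ((j+1)*g) * x g)^2 - 4*c*(x ((j+1)*g) + x g)) = 2*u := by
      rw [Vsub_eq_left hq2 h4cs (by rw [hq2v, h4csv]; omega), hq2v]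
    have hE1v : α + β + 2*u = 2*u := by
      have hL : V p (x ((j+2)*g) * x (j*g) * (x ((j+1)*g) - x g)^2) = α + β + 2*u := by
        rw [V_mul (mul_ne_zero hxp hxm) (pow_ne_zero _ hd), V_mul hxp hxm, V_pow hd 2, hδv]
        ring
      rw [← hL, e1, hnum1v]
    -- the key translated identity
    have idA : (x ((j+2)*g) + x (j*g) - 2*x g) * (x ((j+1)*g) - x g)^2
        = 2*(x g^2*(3*x ((j+1)*g) - x g) + 2*c) := by linear_combination e2
    have h3X : (3:ℚ)*x ((j+1)*g) ≠ 0 := mul_ne_zero (by norm_num) hxK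
    have h3Xv : V p ((3:ℚ)*x ((j+1)*g)) = u := by
      rw [V_mul (by norm_num : (3:ℚ) ≠ 0) hxK, H.V3]; ring
    have h3XG0 : 3*x ((j+1)*g) - x g ≠ 0 := sub_ne_zero_of_V_ne (by rw [h3Xv, hg0]; omega)
    have h3XGv : V p (3*x ((j+1)*g) - x g) = u := by
      rw [Vsub_eq_left h3X hxg (by rw [h3Xv, hg0]; omega), h3Xv]
    have hxg2 : x g^2 ≠ 0 := pow_ne_zero _ hxg
    have hxg2v : V p (x g^2) = 0 := by rw [V_pow hxg 2, hg0]; ring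
    have hmain : x g^2*(3*x ((j+1)*g) - x g) ≠ 0 := mul_ne_zero hxg2 h3XG0
    have hmainv : V p (x g^2*(3*x ((j+1)*g) - x g)) = u := by
      rw [V_mul hxg2 h3XG0, hxg2v, h3XGv]; ring
    have h2c : (2:ℚ)*c ≠ 0 := mul_ne_zero (by norm_num) H.hc
    have h2cv : V p ((2:ℚ)*c) = 0 := by
      rw [V_mul (by norm_num : (2:ℚ) ≠ 0) H.hc, H.V2, hVc]; ring
    have hinner0 : x g^2*(3*x ((j+1)*g) - x g) + 2*c ≠ 0 :=
      add_ne_zero_of_V_ne (p := p) (by rw [hmainv, h2cv]; omega)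
    have hinnerv : V p (x g^2*(3*x ((j+1)*g) - x g) + 2*c) = u := by
      rw [V_add_eq_left hmain h2c (by rw [hmainv, h2cv]; omega), hmainv]
    have hRHS0 : (2:ℚ)*(x g^2*(3*x ((j+1)*g) - x g) + 2*c) ≠ 0 :=
      mul_ne_zero (by norm_num) hinner0
    have hRHSv : V p ((2:ℚ)*(x g^2*(3*x ((j+1)*g) - x g) + 2*c)) = u := by
      rw [V_mul (by norm_num : (2:ℚ) ≠ 0) hinner0, H.V2, hinnerv]; ring
    have hT0 : x ((j+2)*g) + x (j*g) - 2*x g ≠ 0 := by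
      intro h0
      rw [h0, zero_mul] at idA
      exact hRHS0 idA.symm
    have hTv : V p (x ((j+2)*g) + x (j*g) - 2*x g) = -u := by
      have hL : V p ((x ((j+2)*g) + x (j*g) - 2*x g) * (x ((j+1)*g) - x g)^2)
          = V p (x ((j+2)*g) + x (j*g) - 2*x g) + 2*u := by
        rw [V_mul hT0 (pow_ne_zero _ hd), V_pow hd 2, hδv]; ring
      have := hL.symm.trans (by rw [idA, hRHSv])
      omega
    rcases Rm with hβneg | ⟨hβ0, hdiffm⟩
    · -- β < 0 : contradiction
      exfalso
      have hαpos : 0 < α := by omega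
      have hsub2 : x ((j+2)*g) - 2*x g ≠ 0 := sub_ne_zero_of_V_ne (by rw [h2Gv]; omega)
      have hsub2v : V p (x ((j+2)*g) - 2*x g) = 0 := by
        rw [Vsub_eq_right hxp h2G (by rw [h2Gv]; omega), h2Gv]
      have hTrw : x ((j+2)*g) + x (j*g) - 2*x g
          = x (j*g) + (x ((j+2)*g) - 2*x g) := by ring
      rw [hTrw] at hTv
      rw [V_add_eq_left hxm hsub2 (by rw [hsub2v]; omega)] at hTv
      omega
    · -- β = 0, so α = 0
      have hα0 : α = 0 := by omega
      refine Or.inr ⟨hα0, ?_⟩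
      rcases hdiffm with hmeq | hmge
      · -- x (j*g) = x g
        have heq : x ((j+2)*g) - x g = x ((j+2)*g) + x (j*g) - 2*x g := by
          linear_combination -hmeq
        refine Or.inr ?_
        rw [heq, hTv]
        omega
      · have hne : x (j*g) - x g ≠ 0 := ne_zero_of_one_le_V hmge
        rcases eq_or_ne (x ((j+2)*g) - x g) 0 with h0 | h0
        · exact Or.inl h0
        · refine Or.inr ?_
          have hrw : x ((j+2)*g) - x g
              = (x ((j+2)*g) + x (j*g) - 2*x g) - (x (j*g) - x g) := by ring
          rw [hrw] at h0 ⊢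
          have := Vsub_ge (p := p) (q := x ((j+2)*g) + x (j*g) - 2*x g)
            (r := x (j*g) - x g) h0
          rw [hTv] at this
          omega
  · -- CASE B : u = 0 and x((j+1)g) ≡ x g
    have hδ0 : x ((j+1)*g) - x g ≠ 0 := hd
    have he' : 1 ≤ V p (x ((j+1)*g) - x g) := by
      rcases hdiff with h0 | h1
      · exact absurd h0 hδ0
      · exact h1
    set e' := V p (x ((j+1)*g) - x g) with he'def
    have vδ : Vge p 1 (x ((j+1)*g) - x g) := Vge.of_V he'
    have vδ0 : Vge p 0 (x ((j+1)*g) - x g) := Vge.weaken (by omega) vδ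
    have vxg : Vge p 0 (x g) := Vge.of_V (by rw [hg0])
    have vc : Vge p 0 c := Vge.of_V (by rw [hVc])
    have v2 : Vge p 0 ((2:ℚ)) := Vge.of_V (by rw [H.V2])
    have v3 : Vge p 0 ((3:ℚ)) := Vge.of_V (by rw [H.V3])
    have v4 : Vge p 0 ((4:ℚ)) := Vge.of_V (by rw [H.V4])
    have vxg3 : Vge p 0 (x g^3) := Vge.of_V (by rw [V_pow hxg 3, hg0]; omega)
    have vxg2 : Vge p 0 (x g^2) := Vge.of_V (by rw [V_pow hxg 2, hg0]; omega)
    -- s and q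
    have hsrw : x ((j+1)*g) + x g = 2*x g + (x ((j+1)*g) - x g) := by ring
    have hsfacts := V_add_main (p := p) h2G h2Gv (by simpa using vδ)
    have hs0 : x ((j+1)*g) + x g ≠ 0 := by rw [hsrw]; exact hsfacts.1
    have hsv : V p (x ((j+1)*g) + x g) = 0 := by rw [hsrw]; exact hsfacts.2
    have hq : x ((j+1)*g) * x g ≠ 0 := mul_ne_zero hxK hxg
    have hqrw : x ((j+1)*g) * x g = x g^2 + x g*(x ((j+1)*g) - x g) := by ring
    have hxg2 : x g^2 ≠ 0 := pow_ne_zero _ hxg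
    have hxg2v : V p (x g^2) = 0 := by rw [V_pow hxg 2, hg0]; ring
    have hqfacts := V_add_main (p := p) hxg2 hxg2v
      (by simpa using Vge.mul vxg vδ)
    have hqv : V p (x ((j+1)*g) * x g) = 0 := by rw [hqrw]; exact hqfacts.2
    -- num1
    have hmainA : x g*(x g^3 - 8*c) ≠ 0 := mul_ne_zero hxg hm80
    have hmainAv : V p (x g*(x g^3 - 8*c)) = 0 := by rw [V_mul hxg hm80, hg0, hm8v]; ring
    have hbrA : Vge p 0 (2*x g^3 + x g^2*(x ((j+1)*g) - x g) - 4*c) := by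
      refine Vge.sub (Vge.add ?_ ?_) ?_
      · simpa using Vge.mul v2 vxg3
      · simpa using Vge.mul vxg2 vδ0
      · simpa using Vge.mul v4 vc
    have hn1rw : (x ((j+1)*g) * x g)^2 - 4*c*(x ((j+1)*g) + x g)
        = x g*(x g^3 - 8*c)
          + (x ((j+1)*g) - x g)*(2*x g^3 + x g^2*(x ((j+1)*g) - x g) - 4*c) := by
      ring
    have hnum1facts := V_add_main (p := p) hmainA hmainAv
      (by simpa using Vge.mul vδ hbrA)
    have hnum10 : (x ((j+1)*g) * x g)^2 - 4*c*(x ((j+1)*g) + x g) ≠ 0 := by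
      rw [hn1rw]; exact hnum1facts.1
    have hnum1v : V p ((x ((j+1)*g) * x g)^2 - 4*c*(x ((j+1)*g) + x g)) = 0 := by
      rw [hn1rw]; exact hnum1facts.2
    -- num2
    have hy2g := H.hy2 hg1
    have hmainB : (2:ℚ)*(x g^3 + c) ≠ 0 := mul_ne_zero (by norm_num) hy2g
    have hmainBv : V p ((2:ℚ)*(x g^3 + c)) = 0 := by
      rw [V_mul (by norm_num : (2:ℚ) ≠ 0) hy2g, H.V2, hy0]; ring
    have hbrB : Vge p 0 (3*x g^2 + x g*(x ((j+1)*g) - x g)) := by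
      refine Vge.add ?_ ?_
      · simpa using Vge.mul v3 vxg2
      · simpa using Vge.mul vxg vδ0
    have hn2rw : (x ((j+1)*g) + x g)*(x ((j+1)*g) * x g) + 2*c
        = 2*(x g^3 + c) + (x ((j+1)*g) - x g)*(3*x g^2 + x g*(x ((j+1)*g) - x g)) := by
      ring
    have hnum2facts := V_add_main (p := p) hmainB hmainBv
      (by simpa using Vge.mul vδ hbrB)
    have hnum20 : (x ((j+1)*g) + x g)*(x ((j+1)*g) * x g) + 2*c ≠ 0 := by
      rw [hn2rw]; exact hnum2facts.1
    have hnum2v : V p ((x ((j+1)*g) + x g)*(x ((j+1)*g) * x g) + 2*c) = 0 := by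
      rw [hn2rw]; exact hnum2facts.2
    -- E1 and E2 valuations
    have hE1v : α + β + 2*e' = 0 := by
      have hL : V p (x ((j+2)*g) * x (j*g) * (x ((j+1)*g) - x g)^2) = α + β + 2*e' := by
        rw [V_mul (mul_ne_zero hxp hxm) (pow_ne_zero _ hd), V_mul hxp hxm, V_pow hd 2]
        ring
      rw [← hL, e1, hnum1v]
    have hsum0 : x ((j+2)*g) + x (j*g) ≠ 0 := by
      intro h0
      have : (2:ℚ)*((x ((j+1)*g) + x g)*(x ((j+1)*g) * x g) + 2*c) = 0 := by
        rw [← e2, h0, zero_mul]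
      exact (mul_ne_zero (by norm_num : (2:ℚ) ≠ 0) hnum20) this
    have hE2v : V p (x ((j+2)*g) + x (j*g)) = -(2*e') := by
      have hL : V p ((x ((j+2)*g) + x (j*g)) * (x ((j+1)*g) - x g)^2)
          = V p (x ((j+2)*g) + x (j*g)) + 2*e' := by
        rw [V_mul hsum0 (pow_ne_zero _ hd), V_pow hd 2]; ring
      have hR : V p ((2:ℚ)*((x ((j+1)*g) + x g)*(x ((j+1)*g) * x g) + 2*c)) = 0 := by
        rw [V_mul (by norm_num : (2:ℚ) ≠ 0) hnum20, H.V2, hnum2v]; ring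
      have := hL.symm.trans (by rw [e2, hR])
      omega
    rcases Rm with hβneg | ⟨hβ0, _⟩
    · -- β < 0
      rcases lt_trichotomy α 0 with hαlt | hα0 | hαgt
      · -- both negative : impossible
        exfalso
        have := V_add_ge (p := p) (q := x ((j+2)*g)) (r := x (j*g)) hsum0
        rw [hE2v] at this
        omega
      · -- α = 0 : propagate the congruence
        have hβval : β = -(2*e') := by omega
        refine Or.inr ⟨hα0, ?_⟩
        have idB : (x ((j+2)*g) - x g) * (x (j*g) * (x ((j+1)*g) - x g)^2)
            = ((x ((j+1)*g) * x g)^2 - 4*c*(x ((j+1)*g) + x g))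
              - 2*x g*((x ((j+1)*g) + x g)*(x ((j+1)*g) * x g) + 2*c)
              + x g * x ((j+2)*g) * (x ((j+1)*g) - x g)^2 := by
          linear_combination e1 - x g * e2
        have hRHSge : Vge p 1 (((x ((j+1)*g) * x g)^2 - 4*c*(x ((j+1)*g) + x g))
              - 2*x g*((x ((j+1)*g) + x g)*(x ((j+1)*g) * x g) + 2*c)
              + x g * x ((j+2)*g) * (x ((j+1)*g) - x g)^2) := by
          have hrw2 : ((x ((j+1)*g) * x g)^2 - 4*c*(x ((j+1)*g) + x g))
              - 2*x g*((x ((j+1)*g) + x g)*(x ((j+1)*g) * x g) + 2*c)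
              + x g * x ((j+2)*g) * (x ((j+1)*g) - x g)^2
              = ((-3)*x g*(x g^3 + 4*c)
                  + (x ((j+1)*g) - x g)
                    *((-4)*x g^3 - x g^2*(x ((j+1)*g) - x g) - 4*c))
                + x g * x ((j+2)*g) * (x ((j+1)*g) - x g)^2 := by ring
          rw [hrw2]
          refine Vge.add (Vge.add ?_ ?_) ?_
          · have vm3g : Vge p 0 ((-3)*x g) := by
              rcases eq_or_ne ((-3:ℚ)*x g) 0 with h0 | h0
              · exact Or.inl h0
              · exact Or.inr (by
                  rw [V_mul (by norm_num : ((-3):ℚ) ≠ 0) hxg, H.Vneg3, hg0]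
                  norm_num)
            simpa using Vge.mul vm3g (Vge.of_V h4cg)
          · have hbr : Vge p 0 ((-4)*x g^3 - x g^2*(x ((j+1)*g) - x g) - 4*c) := by
              refine Vge.sub (Vge.sub ?_ ?_) ?_
              · have vm4 : Vge p 0 ((-4):ℚ) := Vge.of_V (by
                  rw [show ((-4):ℚ) = -(4:ℚ) by norm_num, V_neg, H.V4])
                simpa using Vge.mul vm4 vxg3
              · simpa using Vge.mul vxg2 vδ0
              · simpa using Vge.mul v4 vc
            simpa using Vge.mul vδ hbr
          · refine Vge.of_V ?_
            rw [V_mul (mul_ne_zero hxg hxp) (pow_ne_zero _ hd), V_mul hxg hxp,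
              V_pow hd 2, hg0, ← hαdef, hα0]
            omega
        rcases eq_or_ne (x ((j+2)*g) - x g) 0 with h0 | h0
        · exact Or.inl h0
        · refine Or.inr ?_
          have hL0 : (x ((j+2)*g) - x g) * (x (j*g) * (x ((j+1)*g) - x g)^2) ≠ 0 :=
            mul_ne_zero h0 (mul_ne_zero hxm (pow_ne_zero _ hd))
          have hLv : V p ((x ((j+2)*g) - x g) * (x (j*g) * (x ((j+1)*g) - x g)^2))
              = V p (x ((j+2)*g) - x g) + (β + 2*e') := by
            rw [V_mul h0 (mul_ne_zero hxm (pow_ne_zero _ hd)), V_mul hxm (pow_ne_zero _ hd),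
              V_pow hd 2]
            ring
          have hRHS0 : (((x ((j+1)*g) * x g)^2 - 4*c*(x ((j+1)*g) + x g))
              - 2*x g*((x ((j+1)*g) + x g)*(x ((j+1)*g) * x g) + 2*c)
              + x g * x ((j+2)*g) * (x ((j+1)*g) - x g)^2) ≠ 0 := by
            rw [← idB]; exact hL0
          have hRHSv : 1 ≤ V p (((x ((j+1)*g) * x g)^2 - 4*c*(x ((j+1)*g) + x g))
              - 2*x g*((x ((j+1)*g) + x g)*(x ((j+1)*g) * x g) + 2*c)
              + x g * x ((j+2)*g) * (x ((j+1)*g) - x g)^2) := by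
            rcases hRHSge with h' | h'
            · exact absurd h' hRHS0
            · exact h'
          have := hLv.symm.trans (by rw [idB])
          omega
      · -- α > 0 : impossible
        exfalso
        have : V p (x (j*g) + x ((j+2)*g)) = β := V_add_eq_left hxm hxp (by omega)
        rw [add_comm] at hE2v
        omega
    · -- β = 0 : the new index is in the kernel
      exact Or.inl (by omega)

end Ctx
end PDAux2

namespace PDAux2
open PDAux
variable {p : ℕ} [hp : Fact p.Prime] {c : ℚ} {x : ℕ → ℚ}
namespace Ctx

lemma claimC (H : Ctx p c x) (hVc : V p c = 0) {g : ℕ} (hg1 : 1 ≤ g)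
    (h3g : V p (x (3*g)) < 0) (h2gD : ¬ V p (x (2*g)) < 0)
    (hg0 : V p (x g) = 0) :
    ∀ j, 1 ≤ j → Rp p x g j := by
  have hxg := H.hx0 g hg1
  have hx2g := H.hx0 (2*g) (by omega)
  have hx3g := H.hx0 (3*g) (by omega)
  have hgl2 : g < 2*g := by omega
  have hd2 : x (2*g) - x g ≠ 0 := sub_ne_zero.mpr (H.hxne hg1 hgl2)
  have e1 := H.hE1 (k := 2*g) (l := g) hg1 hgl2
  rw [show 2*g + g = 3*g by ring, show 2*g - g = g by omega] at e1
  have h4c : (4:ℚ)*c ≠ 0 := mul_ne_zero (by norm_num) H.hc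
  have h4cv : V p ((4:ℚ)*c) = 0 := by
    rw [V_mul (by norm_num : (4:ℚ) ≠ 0) H.hc, H.V4, hVc]; ring
  have hxg3 : x g^3 ≠ 0 := pow_ne_zero _ hxg
  have hxg3v : V p (x g^3) = 0 := by rw [V_pow hxg 3, hg0]; ring
  -- step 1 : V (x (2g)) = 0
  have h2g0 : V p (x (2*g)) = 0 := by
    rcases lt_trichotomy (V p (x (2*g))) 0 with h | h | h
    · exact absurd h h2gD
    · exact h
    · exfalso
      have hdv : V p (x (2*g) - x g) = 0 := by
        rw [Vsub_eq_right hx2g hxg (by omega), hg0]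
      have hsv : V p (x (2*g) + x g) = 0 := by
        rw [V_add_eq_right hx2g hxg (by omega), hg0]
      have hs0 : x (2*g) + x g ≠ 0 := add_ne_zero_of_V_ne (p := p) (by omega)
      have hq : x (2*g) * x g ≠ 0 := mul_ne_zero hx2g hxg
      have hqv : V p (x (2*g) * x g) = V p (x (2*g)) := by
        rw [V_mul hx2g hxg, hg0]; ring
      have hq2 : (x (2*g) * x g)^2 ≠ 0 := pow_ne_zero _ hq
      have hq2v : V p ((x (2*g) * x g)^2) = 2*V p (x (2*g)) := by
        rw [V_pow hq 2, hqv]; push_cast; ring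
      have h4cs : 4*c*(x (2*g) + x g) ≠ 0 := mul_ne_zero h4c hs0
      have h4csv : V p (4*c*(x (2*g) + x g)) = 0 := by
        rw [V_mul h4c hs0, h4cv, hsv]; ring
      have hnumv : V p ((x (2*g) * x g)^2 - 4*c*(x (2*g) + x g)) = 0 := by
        rw [Vsub_eq_right hq2 h4cs (by omega), h4csv]
      have hL : V p (x (3*g) * x g * (x (2*g) - x g)^2) = V p (x (3*g)) := by
        rw [V_mul (mul_ne_zero hx3g hxg) (pow_ne_zero _ hd2), V_mul hx3g hxg,
          V_pow hd2 2, hg0, hdv]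
        ring
      have := hL.symm.trans (by rw [e1, hnumv])
      omega
  -- step 2 : the congruence x(2g) ≡ x(g)
  have he2g : 1 ≤ V p (x (2*g) - x g) := by
    by_contra hcon
    push_neg at hcon
    have hge : (0:ℤ) ≤ V p (x (2*g) - x g) := by
      have := Vsub_ge (p := p) (q := x (2*g)) (r := x g) hd2
      rw [h2g0, hg0] at this
      omega
    have he0 : V p (x (2*g) - x g) = 0 := by omega
    have hnum0 : (x (2*g) * x g)^2 - 4*c*(x (2*g) + x g) ≠ 0 := by
      rw [← e1]
      exact mul_ne_zero (mul_ne_zero hx3g hxg) (pow_ne_zero _ hd2)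
    have hq : x (2*g) * x g ≠ 0 := mul_ne_zero hx2g hxg
    have hqv : V p (x (2*g) * x g) = 0 := by rw [V_mul hx2g hxg, hg0, h2g0]; ring
    have hq2ge : Vge p 0 ((x (2*g) * x g)^2) :=
      Vge.of_V (by rw [V_pow hq 2, hqv]; omega)
    have hsge : Vge p 0 (x (2*g) + x g) := by
      rcases eq_or_ne (x (2*g) + x g) 0 with h0 | h0
      · exact Or.inl h0
      · refine Or.inr ?_
        have := V_add_ge (p := p) (q := x (2*g)) (r := x g) h0
        rw [h2g0, hg0] at this
        omega
    have h4cge : Vge p 0 ((4:ℚ)*c) := Vge.of_V (by rw [h4cv])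
    have hnumge : Vge p 0 ((x (2*g) * x g)^2 - 4*c*(x (2*g) + x g)) := by
      refine Vge.sub hq2ge ?_
      simpa using Vge.mul h4cge hsge
    have hnumv : (0:ℤ) ≤ V p ((x (2*g) * x g)^2 - 4*c*(x (2*g) + x g)) := by
      rcases hnumge with h0 | h0
      · exact absurd h0 hnum0
      · exact h0
    have hL : V p (x (3*g) * x g * (x (2*g) - x g)^2) = V p (x (3*g)) := by
      rw [V_mul (mul_ne_zero hx3g hxg) (pow_ne_zero _ hd2), V_mul hx3g hxg,
        V_pow hd2 2, hg0, he0]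
      ring
    have := hL.symm.trans (congrArg (V p) e1)
    omega
  -- step 3 : x g³ - 8c and x g³ + c are units
  have e3 := H.hE3 hg1
  have hy2g := H.hy2 hg1
  have hm80 : x g^3 - 8*c ≠ 0 := by
    intro h0
    have h1 : x g * (x g^3 - 8*c) = 0 := by rw [h0, mul_zero]
    rw [← e3] at h1
    exact (mul_ne_zero hx2g (mul_ne_zero (by norm_num) hy2g)) h1
  have h8c : (8:ℚ)*c ≠ 0 := mul_ne_zero (by norm_num) H.hc
  have h8cv : V p ((8:ℚ)*c) = 0 := by
    rw [V_mul (by norm_num : (8:ℚ) ≠ 0) H.hc, H.V8, hVc]; ring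
  have hyge : (0:ℤ) ≤ V p (x g^3 + c) := by
    have := V_add_ge (p := p) (q := x g^3) (r := c) hy2g
    rw [hxg3v, hVc] at this
    omega
  have hm8ge : (0:ℤ) ≤ V p (x g^3 - 8*c) := by
    have h1 : x g^3 - 8*c = x g^3 - (8*c) := by ring
    have := Vsub_ge (p := p) (q := x g^3) (r := 8*c) hm80
    rw [hxg3v, h8cv] at this
    omega
  have hgamma : V p (x g^3 + c) = V p (x g^3 - 8*c) := by
    have hL : V p (x (2*g) * (4*(x g^3 + c))) = V p (x g^3 + c) := by
      rw [V_mul hx2g (mul_ne_zero (by norm_num) hy2g),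
        V_mul (by norm_num : (4:ℚ) ≠ 0) hy2g, H.V4, h2g0]
      ring
    have hR : V p (x g * (x g^3 - 8*c)) = V p (x g^3 - 8*c) := by
      rw [V_mul hxg hm80, hg0]; ring
    rw [← hL, e3, hR]
  have hy0 : V p (x g^3 + c) = 0 := by
    by_contra hcon
    have h1 : (1:ℤ) ≤ V p (x g^3 + c) := by omega
    have h9c : (9:ℚ)*c ≠ 0 := mul_ne_zero (by norm_num) H.hc
    have h9cv : V p ((9:ℚ)*c) = 0 := by
      rw [V_mul (by norm_num : (9:ℚ) ≠ 0) H.hc, H.V9, hVc]; ring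
    have h9crw : (9:ℚ)*c = (x g^3 + c) - (x g^3 - 8*c) := by ring
    have := Vsub_ge (p := p) (q := x g^3 + c) (r := x g^3 - 8*c)
      (by rw [← h9crw]; exact h9c)
    rw [← h9crw, h9cv, ← hgamma] at this
    omega
  have hm8v : V p (x g^3 - 8*c) = 0 := by rw [← hgamma, hy0]
  -- step 4 : x g³ + 4c ≡ 0
  have dkey : (x (2*g) - x g) * (4*(x g^3 + c)) = -3 * x g * (x g^3 + 4*c) := by
    linear_combination H.hE3 hg1
  have h4cg0 : x g^3 + 4*c ≠ 0 := by
    intro h0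
    have h1 : (x (2*g) - x g) * (4*(x g^3 + c)) = 0 := by
      rw [dkey, h0, mul_zero]
    exact (mul_ne_zero hd2 (mul_ne_zero (by norm_num) hy2g)) h1
  have h4cg : 1 ≤ V p (x g^3 + 4*c) := by
    have hL : V p ((x (2*g) - x g) * (4*(x g^3 + c))) = V p (x (2*g) - x g) := by
      rw [V_mul hd2 (mul_ne_zero (by norm_num) hy2g),
        V_mul (by norm_num : (4:ℚ) ≠ 0) hy2g, H.V4, hy0]
      ring
    have hR : V p (-3 * x g * (x g^3 + 4*c)) = V p (x g^3 + 4*c) := by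
      rw [V_mul (mul_ne_zero (by norm_num) hxg) h4cg0,
        V_mul (by norm_num : ((-3):ℚ) ≠ 0) hxg, H.Vneg3, hg0]
      ring
    have := hL.symm.trans (by rw [dkey, hR])
    omega
  -- the two base cases
  have hR1 : Rp p x g 1 := by
    refine Or.inr ⟨?_, Or.inl ?_⟩
    · rw [one_mul]; exact hg0
    · rw [one_mul, sub_self]
  have hR2 : Rp p x g 2 := Or.inr ⟨h2g0, Or.inr he2g⟩
  -- two-step induction
  have main : ∀ j, 1 ≤ j → Rp p x g j ∧ Rp p x g (j+1) := by
    intro j hj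
    induction j with
    | zero => omega
    | succ j ih =>
      rcases Nat.lt_or_ge j 1 with hj0 | hj1
      · have : j = 0 := by omega
        subst this
        exact ⟨hR1, hR2⟩
      · obtain ⟨rj, rj1⟩ := ih hj1
        exact ⟨rj1, H.stepC hVc hg1 hg0 hm80 hm8v hy0 h4cg0 h4cg hj1 rj rj1⟩
  intro j hj
  exact (main j hj).1

end Ctx
end PDAux2

namespace PDAux3
open PDAux PDAux2

lemma field_E1E2 {F : Type*} [Field F] {x1 x2 y1 y2 cc xp xm : F}
    (h1 : y1^2 = x1^3 + cc) (h2 : y2^2 = x2^3 + cc) (hx : x1 - x2 ≠ 0)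
    (hpf : xp = ((y1 - y2)/(x1 - x2))^2 - x1 - x2)
    (hmf : xm = ((y1 + y2)/(x1 - x2))^2 - x1 - x2) :
    xp * xm * (x1 - x2)^2 = (x1*x2)^2 - 4*cc*(x1 + x2) ∧
      (xp + xm) * (x1 - x2)^2 = 2*((x1 + x2)*(x1*x2) + 2*cc) := by
  have hP : xp * (x1 - x2)^2 = (y1 - y2)^2 - (x1 + x2)*(x1 - x2)^2 := by
    rw [hpf]; field_simp; ring
  have hM : xm * (x1 - x2)^2 = (y1 + y2)^2 - (x1 + x2)*(x1 - x2)^2 := by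
    rw [hmf]; field_simp; ring
  constructor
  · apply mul_right_cancel₀ (pow_ne_zero 2 hx)
    calc xp * xm * (x1-x2)^2 * (x1-x2)^2 = (xp*(x1-x2)^2) * (xm*(x1-x2)^2) := by ring
    _ = ((y1 - y2)^2 - (x1+x2)*(x1-x2)^2) * ((y1 + y2)^2 - (x1+x2)*(x1-x2)^2) := by
        rw [hP, hM]
    _ = ((x1*x2)^2 - 4*cc*(x1+x2)) * (x1-x2)^2 := by
        linear_combination (x1^3 - x2^3 + y1^2 - y2^2 - 2*(x1+x2)*(x1-x2)^2) * h1
          + (-(x1^3 - x2^3 + y1^2 - y2^2) - 2*(x1+x2)*(x1-x2)^2) * h2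
  · calc (xp + xm) * (x1-x2)^2 = xp*(x1-x2)^2 + xm*(x1-x2)^2 := by ring
    _ = 2*((x1 + x2)*(x1*x2) + 2*cc) := by
        rw [hP, hM]; linear_combination 2*h1 + 2*h2

lemma field_E3 {x1 y1 cc x2 : ℚ} (h1 : y1^2 = x1^3 + cc) (hy : y1 ≠ 0)
    (hx : x2 = (3*x1^2/(2*y1))^2 - x1 - x1) :
    x2 * (4*(x1^3 + cc)) = x1*(x1^3 - 8*cc) := by
  have h4 : x2 * (4*y1^2) = 9*x1^4 - 8*x1*y1^2 := by
    have hd : (3*x1^2/(2*y1))^2 = 9*x1^4/(4*y1^2) := by rw [div_pow]; ring_nf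
    have h2 : (4:ℚ)*y1^2 ≠ 0 := mul_ne_zero (by norm_num) (pow_ne_zero _ hy)
    rw [hx, hd, sub_mul, sub_mul, div_mul_cancel₀ _ h2]
    ring
  rw [← h1, h4]; linear_combination (-8*x1)*h1

end PDAux3

namespace PDAux3
open PDAux PDAux2 WeierstrassCurve WeierstrassCurve.Affine

lemma Ma1 (m : ℤ) : (Mordell m).a₁ = 0 := rfl
lemma Ma2 (m : ℤ) : (Mordell m).a₂ = 0 := rfl
lemma Ma3 (m : ℤ) : (Mordell m).a₃ = 0 := rfl
lemma Ma4 (m : ℤ) : (Mordell m).a₄ = 0 := rfl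
lemma Ma6 (m : ℤ) : (Mordell m).a₆ = -432 * (m : ℚ) ^ 2 := rfl

lemma MnegY (m : ℤ) (x y : ℚ) : (Mordell m).negY x y = -y := by
  rw [WeierstrassCurve.Affine.negY, Ma1, Ma3]; ring

lemma xCoord_some {m : ℤ} {x y : ℚ} (h : (Mordell m).Nonsingular x y) :
    xCoord (WeierstrassCurve.Affine.Point.some _ _ h) = x := rfl

lemma Meq {m : ℤ} {x y : ℚ} (h : (Mordell m).Nonsingular x y) :
    y^2 = x^3 + (-432 * (m : ℚ) ^ 2) := by
  have h1 := ((Mordell m).equation_iff x y).mp h.1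
  rw [Ma1, Ma2, Ma3, Ma4, Ma6] at h1
  linear_combination h1

lemma mordell_ctx (m : ℤ) (hm : m ≠ 0)
    (Q : (Mordell m).Point) (hQ : ∀ k : ℕ, 0 < k → k • Q ≠ 0)
    (A B C : ℕ → ℤ) (hB : ∀ n : ℕ, 1 ≤ n → 1 ≤ B n)
    (hABC : ∀ n : ℕ, 1 ≤ n →
      ∃ h : (Mordell m).Nonsingular ((A n : ℚ) / (B n : ℚ) ^ 2) ((C n : ℚ) / (B n : ℚ) ^ 3),
        n • Q = WeierstrassCurve.Affine.Point.some _ _ h)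
    (p : ℕ) [hpf : Fact p.Prime] (hp5 : 5 ≤ p) :
    PDAux2.Ctx p (-432 * (m : ℚ) ^ 2) (fun k => (A k : ℚ)/(B k : ℚ)^2) := by
  have hmq : (m : ℚ) ≠ 0 := Int.cast_ne_zero.mpr hm
  have hc0 : (-432 * (m:ℚ)^2) ≠ 0 := by
    intro h
    have h2 : (m:ℚ)^2 ≠ 0 := pow_ne_zero _ hmq
    apply h2
    linarith
  have hcneg : (-432 * (m:ℚ)^2) < 0 := by
    have h2 : (m:ℚ)^2 ≠ 0 := pow_ne_zero _ hmq
    have h3 : 0 ≤ (m:ℚ)^2 := sq_nonneg _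
    have h4 : 0 < (m:ℚ)^2 := lt_of_le_of_ne h3 (Ne.symm h2)
    linarith
  have hBQ : ∀ k : ℕ, 1 ≤ k → ((B k : ℚ)) ≠ 0 := by
    intro k hk
    have := hB k hk
    exact_mod_cast (by omega : B k ≠ 0)
  -- x-coordinates are nonzero
  have hx0 : ∀ k : ℕ, 1 ≤ k → (A k : ℚ)/(B k : ℚ)^2 ≠ 0 := by
    intro k hk h0
    obtain ⟨h, -⟩ := hABC k hk
    have heq := Meq h
    rw [h0] at heq
    have h1 := sq_nonneg ((C k : ℚ)/(B k : ℚ)^3)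
    rw [heq] at h1
    simp only [ne_eq, OfNat.ofNat_ne_zero, not_false_eq_true, zero_pow, zero_add] at h1
    linarith
  -- distinct indices give distinct x-coordinates
  have hxne : ∀ k l : ℕ, 1 ≤ l → l < k → (A k : ℚ)/(B k : ℚ)^2 ≠ (A l : ℚ)/(B l : ℚ)^2 := by
    intro k l hl hlk hxy
    obtain ⟨hk', hkq⟩ := hABC k (by omega)
    obtain ⟨hl', hlq⟩ := hABC l hl
    have heqk := Meq hk'
    have heql := Meq hl'
    have hy2 : ((C k:ℚ)/(B k:ℚ)^3)^2 = ((C l:ℚ)/(B l:ℚ)^3)^2 := by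
      rw [heqk, heql, hxy]
    have hfac : ((C k:ℚ)/(B k:ℚ)^3 - (C l:ℚ)/(B l:ℚ)^3)
        * ((C k:ℚ)/(B k:ℚ)^3 + (C l:ℚ)/(B l:ℚ)^3) = 0 := by
      linear_combination hy2
    rcases mul_eq_zero.mp hfac with h0 | h0
    · -- y_k = y_l : (k-l)•Q = 0
      have hyy : (C k:ℚ)/(B k:ℚ)^3 = (C l:ℚ)/(B l:ℚ)^3 := by linarith [sub_eq_zero.mp h0]
      have hz : (k - l) • Q = 0 := by
        rw [sub_nsmul Q hlk.le, hkq, hlq,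
          WeierstrassCurve.Affine.Point.neg_some]
        refine WeierstrassCurve.Affine.Point.add_of_Y_eq hxy ?_
        rw [WeierstrassCurve.Affine.negY_negY]
        exact hyy
      exact hQ (k - l) (by omega) hz
    · -- y_k = -y_l : (k+l)•Q = 0
      have hyy : (C k:ℚ)/(B k:ℚ)^3 = -((C l:ℚ)/(B l:ℚ)^3) := by linarith
      have hz : (k + l) • Q = 0 := by
        rw [add_nsmul, hkq, hlq]
        refine WeierstrassCurve.Affine.Point.add_of_Y_eq hxy ?_
        rw [MnegY]
        exact hyy
      exact hQ (k + l) (by omega) hz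
  -- y-coordinates are nonzero
  have hy0 : ∀ k : ℕ, 1 ≤ k → (C k : ℚ)/(B k : ℚ)^3 ≠ 0 := by
    intro k hk h0
    obtain ⟨hk', hkq⟩ := hABC k hk
    have hz : (2 * k) • Q = 0 := by
      rw [show 2*k = k + k by ring, add_nsmul, hkq]
      refine WeierstrassCurve.Affine.Point.add_of_Y_eq rfl ?_
      rw [MnegY, h0]
      norm_num
    exact hQ (2 * k) (by omega) hz
  -- the addition relations
  have hE12 : ∀ k l : ℕ, 1 ≤ l → l < k →
      ((A (k+l) : ℚ)/(B (k+l) : ℚ)^2) * ((A (k-l) : ℚ)/(B (k-l) : ℚ)^2)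
          * ((A k : ℚ)/(B k : ℚ)^2 - (A l : ℚ)/(B l : ℚ)^2)^2
        = (((A k : ℚ)/(B k : ℚ)^2) * ((A l : ℚ)/(B l : ℚ)^2))^2
          - 4*(-432 * (m : ℚ) ^ 2)*((A k : ℚ)/(B k : ℚ)^2 + (A l : ℚ)/(B l : ℚ)^2) ∧
      ((A (k+l) : ℚ)/(B (k+l) : ℚ)^2 + (A (k-l) : ℚ)/(B (k-l) : ℚ)^2)
          * ((A k : ℚ)/(B k : ℚ)^2 - (A l : ℚ)/(B l : ℚ)^2)^2
        = 2*(((A k : ℚ)/(B k : ℚ)^2 + (A l : ℚ)/(B l : ℚ)^2)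
            * (((A k : ℚ)/(B k : ℚ)^2) * ((A l : ℚ)/(B l : ℚ)^2)) + 2*(-432 * (m : ℚ) ^ 2)) := by
    intro k l hl hlk
    obtain ⟨hk', hkq⟩ := hABC k (by omega)
    obtain ⟨hl', hlq⟩ := hABC l hl
    obtain ⟨hp', hpq⟩ := hABC (k+l) (by omega)
    obtain ⟨hm', hmq'⟩ := hABC (k-l) (by omega)
    have hx : (A k : ℚ)/(B k : ℚ)^2 ≠ (A l : ℚ)/(B l : ℚ)^2 := hxne k l hl hlk
    have hadd : (k+l) • Q = WeierstrassCurve.Affine.Point.some _ _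
        (WeierstrassCurve.Affine.nonsingular_add hk' hl' (fun h => absurd h.1 hx)) := by
      rw [add_nsmul, hkq, hlq]
      exact WeierstrassCurve.Affine.Point.add_of_X_ne hx
    have hxp : (A (k+l) : ℚ)/(B (k+l) : ℚ)^2
        = (Mordell m).addX ((A k : ℚ)/(B k : ℚ)^2) ((A l : ℚ)/(B l : ℚ)^2)
          ((Mordell m).slope ((A k : ℚ)/(B k : ℚ)^2) ((A l : ℚ)/(B l : ℚ)^2)
            ((C k : ℚ)/(B k : ℚ)^3) ((C l : ℚ)/(B l : ℚ)^3)) :=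
      congrArg xCoord (hpq.symm.trans hadd)
    rw [WeierstrassCurve.Affine.slope_of_X_ne hx] at hxp
    simp only [WeierstrassCurve.Affine.addX, Ma1, Ma2] at hxp
    have hsub : (k-l) • Q = WeierstrassCurve.Affine.Point.some _ _
        (WeierstrassCurve.Affine.nonsingular_add hk'
          ((WeierstrassCurve.Affine.nonsingular_neg ..).mpr hl') (fun h => absurd h.1 hx)) := by
      rw [sub_nsmul Q hlk.le, hkq, hlq,
        WeierstrassCurve.Affine.Point.neg_some]
      exact WeierstrassCurve.Affine.Point.add_of_X_ne hx
    have hxm : (A (k-l) : ℚ)/(B (k-l) : ℚ)^2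
        = (Mordell m).addX ((A k : ℚ)/(B k : ℚ)^2) ((A l : ℚ)/(B l : ℚ)^2)
          ((Mordell m).slope ((A k : ℚ)/(B k : ℚ)^2) ((A l : ℚ)/(B l : ℚ)^2)
            ((C k : ℚ)/(B k : ℚ)^3) ((Mordell m).negY ((A l : ℚ)/(B l : ℚ)^2)
              ((C l : ℚ)/(B l : ℚ)^3))) :=
      congrArg xCoord (hmq'.symm.trans hsub)
    rw [WeierstrassCurve.Affine.slope_of_X_ne hx, MnegY] at hxm
    simp only [WeierstrassCurve.Affine.addX, Ma1, Ma2] at hxm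
    exact field_E1E2 (Meq hk') (Meq hl') (sub_ne_zero.mpr hx)
      (by rw [hxp]; ring) (by rw [hxm]; ring)
  -- doubling relation
  have hE3 : ∀ k : ℕ, 1 ≤ k →
      ((A (2*k) : ℚ)/(B (2*k) : ℚ)^2) * (4*(((A k : ℚ)/(B k : ℚ)^2)^3 + (-432 * (m : ℚ) ^ 2)))
        = ((A k : ℚ)/(B k : ℚ)^2) * (((A k : ℚ)/(B k : ℚ)^2)^3 - 8*(-432 * (m : ℚ) ^ 2)) := by
    intro k hk
    obtain ⟨hk', hkq⟩ := hABC k hk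
    obtain ⟨h2', h2q⟩ := hABC (2*k) (by omega)
    have hyk := hy0 k hk
    have hyne : (C k : ℚ)/(B k : ℚ)^3
        ≠ (Mordell m).negY ((A k : ℚ)/(B k : ℚ)^2) ((C k : ℚ)/(B k : ℚ)^3) := by
      rw [MnegY]
      intro h
      apply hyk
      linarith
    have hdq : (2*k) • Q = WeierstrassCurve.Affine.Point.some _ _
        (WeierstrassCurve.Affine.nonsingular_add hk' hk' (fun h => hyne h.2)) := by
      rw [show 2*k = k + k by ring, add_nsmul, hkq]
      exact WeierstrassCurve.Affine.Point.add_of_Y_ne hyne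
    have hx2 : (A (2*k) : ℚ)/(B (2*k) : ℚ)^2
        = (Mordell m).addX ((A k : ℚ)/(B k : ℚ)^2) ((A k : ℚ)/(B k : ℚ)^2)
          ((Mordell m).slope ((A k : ℚ)/(B k : ℚ)^2) ((A k : ℚ)/(B k : ℚ)^2)
            ((C k : ℚ)/(B k : ℚ)^3) ((C k : ℚ)/(B k : ℚ)^3)) :=
      congrArg xCoord (h2q.symm.trans hdq)
    rw [WeierstrassCurve.Affine.slope_of_Y_ne rfl hyne] at hx2
    have hLrw : (3*((A k : ℚ)/(B k : ℚ)^2)^2 + 2*(Mordell m).a₂*((A k : ℚ)/(B k : ℚ)^2)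
          + (Mordell m).a₄ - (Mordell m).a₁*((C k : ℚ)/(B k : ℚ)^3))
          / ((C k : ℚ)/(B k : ℚ)^3
            - (Mordell m).negY ((A k : ℚ)/(B k : ℚ)^2) ((C k : ℚ)/(B k : ℚ)^3))
        = 3*((A k : ℚ)/(B k : ℚ)^2)^2 / (2*((C k : ℚ)/(B k : ℚ)^3)) := by
      rw [Ma1, Ma2, Ma4, MnegY]
      congr 1 <;> ring
    rw [hLrw] at hx2
    simp only [WeierstrassCurve.Affine.addX, Ma1, Ma2] at hx2
    exact field_E3 (Meq hk') hyk (by rw [hx2]; ring)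
  -- assemble the context
  refine ⟨hp5, hc0, ?_, hx0, fun k l hl hlk => hxne k l hl hlk,
    fun k l hl hlk => (hE12 k l hl hlk).1, fun k l hl hlk => (hE12 k l hl hlk).2,
    fun k hk => hE3 k hk, ?_⟩
  · -- 0 ≤ V c
    have hcast : (-432 * (m:ℚ)^2) = (((-432 * m^2 : ℤ)) : ℚ) := by push_cast; ring
    rw [hcast]
    exact V_int_nonneg
  · -- y² = x³ + c ≠ 0
    intro k hk
    obtain ⟨hk', -⟩ := hABC k hk
    rw [← Meq hk']
    exact pow_ne_zero _ (hy0 k hk)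

end PDAux3

namespace PDAux
variable {p : ℕ} [hp : Fact p.Prime]

lemma V_div_sq {a b : ℤ} (ha : a ≠ 0) (hb : b ≠ 0) :
    V p ((a:ℚ)/(b:ℚ)^2) = (padicValInt p a : ℤ) - 2*(padicValInt p b : ℤ) := by
  have haq : (a:ℚ) ≠ 0 := Int.cast_ne_zero.mpr ha
  have hbq : (b:ℚ) ≠ 0 := Int.cast_ne_zero.mpr hb
  rw [V, padicValRat.div haq (pow_ne_zero _ hbq), padicValRat.pow (b:ℚ),
    padicValRat.of_int, padicValRat.of_int]
  push_cast
  ring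

lemma dict_pos {a b : ℤ} (ha : a ≠ 0) (hb : b ≠ 0) (hnb : ¬ (p:ℤ) ∣ b)
    (hd : (p:ℤ) ∣ a) : 1 ≤ V p ((a:ℚ)/(b:ℚ)^2) := by
  rw [V_div_sq ha hb, padicValInt.eq_zero_of_not_dvd hnb]
  have := padicValInt_pos ha hd
  omega

lemma dict_neg {a b : ℤ} (ha : a ≠ 0) (hb : b ≠ 0) (hna : ¬ (p:ℤ) ∣ a)
    (hd : (p:ℤ) ∣ b) : V p ((a:ℚ)/(b:ℚ)^2) < 0 := by
  rw [V_div_sq ha hb, padicValInt.eq_zero_of_not_dvd hna]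
  have := padicValInt_pos hb hd
  omega

lemma dict_zero {a b : ℤ} (ha : a ≠ 0) (hb : b ≠ 0) (hna : ¬ (p:ℤ) ∣ a)
    (hnb : ¬ (p:ℤ) ∣ b) : V p ((a:ℚ)/(b:ℚ)^2) = 0 := by
  rw [V_div_sq ha hb, padicValInt.eq_zero_of_not_dvd hna,
    padicValInt.eq_zero_of_not_dvd hnb]
  ring

end PDAux

namespace PDAux3

lemma gcd3 {N n : ℕ} (hN : 0 < N) (hn : 0 < n) (h3 : N ∣ 3*n) (hnd : ¬ N ∣ n) :
    N = 3 * (N.gcd n) ∧ N.gcd n ∣ n := by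
  set g := N.gcd n with hg
  have hg0 : 0 < g := Nat.gcd_pos_of_pos_left n hN
  have hgN : g ∣ N := Nat.gcd_dvd_left N n
  have hgn : g ∣ n := Nat.gcd_dvd_right N n
  have hco : Nat.Coprime (N/g) (n/g) := Nat.coprime_div_gcd_div_gcd hg0
  have hdvd : (N/g) ∣ 3*(n/g) := by
    obtain ⟨a, ha⟩ := hgN
    obtain ⟨b, hb⟩ := hgn
    have h1 : g*a ∣ g*(3*b) := by
      rw [← ha]
      have h2 : 3*n = g*(3*b) := by rw [hb]; ring
      rw [← h2]
      exact h3
    have h2 : a ∣ 3*b := (mul_dvd_mul_iff_left (by omega : g ≠ 0)).mp h1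
    have ha' : N/g = a := by rw [ha]; exact Nat.mul_div_cancel_left a hg0
    have hb' : n/g = b := by rw [hb]; exact Nat.mul_div_cancel_left b hg0
    rw [ha', hb']
    exact h2
  have h3' : (N/g) ∣ 3 := Nat.Coprime.dvd_of_dvd_mul_right hco hdvd
  have hNg : (N/g)*g = N := Nat.div_mul_cancel hgN
  rcases (Nat.dvd_prime Nat.prime_three).mp h3' with h1 | h1
  · exfalso
    apply hnd
    rw [h1, one_mul] at hNg
    rw [← hNg]
    exact hgn
  · rw [h1] at hNg
    exact ⟨by omega, hgn⟩

end PDAux3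


open PDAux PDAux2 PDAux3

theorem primitive_divisor_of_A_rank_of_apparition_in_B
    (m : ℤ) (hm : m ≠ 0) (hcf : CubeFree m)
    (Q : (Mordell m).Point) (hQ : ∀ k : ℕ, 0 < k → k • Q ≠ 0)
    (A B C : ℕ → ℤ)
    (hB : ∀ n : ℕ, 1 ≤ n → 1 ≤ B n)
    (hAB : ∀ n : ℕ, 1 ≤ n → Int.gcd (A n) (B n) = 1)
    (hCB : ∀ n : ℕ, 1 ≤ n → Int.gcd (C n) (B n) = 1)
    (hABC : ∀ n : ℕ, 1 ≤ n →
      ∃ h : (Mordell m).Nonsingular ((A n : ℚ) / (B n : ℚ) ^ 2) ((C n : ℚ) / (B n : ℚ) ^ 3),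
        n • Q = WeierstrassCurve.Affine.Point.some _ _ h)
    (n : ℕ) (hn : 2 ≤ n) (p : ℕ) (hp : p.Prime) (hp5 : 5 ≤ p)
    (hdvd : (p : ℤ) ∣ A n) (hprim : ∀ k : ℕ, 1 ≤ k → k < n → ¬ (p : ℤ) ∣ A k) :
    ¬ (p : ℤ) ∣ m ∧ (p : ℤ) ∣ B (3 * n) ∧
      ∀ r : ℕ, 1 ≤ r → r < 3 * n → ¬ (p : ℤ) ∣ B r := by
  classical
  haveI hpf : Fact p.Prime := ⟨hp⟩
  have H := PDAux3.mordell_ctx m hm Q hQ A B C hB hABC p hp5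
  have hmq : (m : ℚ) ≠ 0 := Int.cast_ne_zero.mpr hm
  -- nonvanishing of numerators and denominators
  have hBne : ∀ k : ℕ, 1 ≤ k → B k ≠ 0 := by
    intro k hk
    have := hB k hk
    omega
  have hAne : ∀ k : ℕ, 1 ≤ k → A k ≠ 0 := by
    intro k hk h0
    apply H.hx0 k hk
    show (A k : ℚ)/(B k : ℚ)^2 = 0
    rw [h0]
    simp
  have hcop : ∀ k : ℕ, 1 ≤ k → ¬ ((p:ℤ) ∣ A k ∧ (p:ℤ) ∣ B k) := by
    rintro k hk ⟨h1, h2⟩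
    have h3 : (p:ℤ) ∣ (Int.gcd (A k) (B k) : ℤ) := Int.dvd_coe_gcd h1 h2
    rw [hAB k hk] at h3
    have h4 : (p:ℤ) ≤ 1 := Int.le_of_dvd one_pos (by exact_mod_cast h3)
    have h5 : (5:ℤ) ≤ (p:ℤ) := by exact_mod_cast hp5
    omega
  -- dictionary between valuations and divisibility
  have hdpos : ∀ k : ℕ, 1 ≤ k → (p:ℤ) ∣ A k → 1 ≤ V p ((A k:ℚ)/(B k:ℚ)^2) := by
    intro k hk hd
    have hnb : ¬ (p:ℤ) ∣ B k := fun h => hcop k hk ⟨hd, h⟩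
    exact dict_pos (hAne k hk) (hBne k hk) hnb hd
  have hdneg : ∀ k : ℕ, 1 ≤ k → (p:ℤ) ∣ B k → V p ((A k:ℚ)/(B k:ℚ)^2) < 0 := by
    intro k hk hd
    have hna : ¬ (p:ℤ) ∣ A k := fun h => hcop k hk ⟨h, hd⟩
    exact dict_neg (hAne k hk) (hBne k hk) hna hd
  have hdnotA : ∀ k : ℕ, 1 ≤ k → ¬ (p:ℤ) ∣ A k → V p ((A k:ℚ)/(B k:ℚ)^2) ≤ 0 := by
    intro k hk hna
    rcases Classical.em ((p:ℤ) ∣ B k) with hb | hb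
    · exact le_of_lt (dict_neg (hAne k hk) (hBne k hk) hna hb)
    · exact le_of_eq (dict_zero (hAne k hk) (hBne k hk) hna hb)
  have hdpos' : ∀ k : ℕ, 1 ≤ k → 1 ≤ V p ((A k:ℚ)/(B k:ℚ)^2) → (p:ℤ) ∣ A k := by
    intro k hk hv
    by_contra h
    have := hdnotA k hk h
    omega
  have hdneg' : ∀ k : ℕ, 1 ≤ k → V p ((A k:ℚ)/(B k:ℚ)^2) < 0 → (p:ℤ) ∣ B k := by
    intro k hk hv
    by_contra hb
    rcases Classical.em ((p:ℤ) ∣ A k) with ha | ha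
    · have := hdpos k hk ha
      omega
    · have := dict_zero (p := p) (hAne k hk) (hBne k hk) ha hb
      omega
  have htpos : 1 ≤ V p ((A n:ℚ)/(B n:ℚ)^2) := hdpos n (by omega) hdvd
  -- part (a) : p does not divide m
  have hpm : ¬ (p:ℤ) ∣ m := by
    intro hpm
    have hVc2 : 2 ≤ V p (-432 * (m:ℚ)^2) := by
      have hrw : (-432 * (m:ℚ)^2) = ((-432 : ℤ):ℚ) * ((m:ℤ):ℚ)^2 := by push_cast; ring
      rw [hrw, V_mul (by norm_num) (pow_ne_zero _ hmq), V_pow hmq 2]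
      have h1 : 0 ≤ V p (((-432:ℤ)):ℚ) := V_int_nonneg
      have h2 : 1 ≤ V p (((m:ℤ)):ℚ) := V_int_pos hm hpm
      omega
    have h1A : ¬ (p:ℤ) ∣ A 1 := hprim 1 le_rfl (by omega)
    have h1v : V p ((A 1:ℚ)/(B 1:ℚ)^2) = 0 := by
      rcases Classical.em ((p:ℤ) ∣ B 1) with hB1 | hB1
      · exfalso
        have h1neg : V p ((A 1:ℚ)/(B 1:ℚ)^2) < 0 := hdneg 1 le_rfl hB1
        have h2 : V p ((A (n*1):ℚ)/(B (n*1):ℚ)^2) < 0 :=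
          H.Dmult le_rfl h1neg n (by omega)
        rw [mul_one] at h2
        omega
      · exact dict_zero (hAne 1 le_rfl) (hBne 1 le_rfl) h1A hB1
    have hn1v : V p ((A (n-1):ℚ)/(B (n-1):ℚ)^2) ≤ 0 :=
      hdnotA (n-1) (by omega) (hprim (n-1) (by omega) (by omega))
    exact H.parta hVc2 hn h1v hn1v htpos
  -- good reduction : V c = 0
  have h432 : ¬ (p:ℤ) ∣ (-432 : ℤ) := by
    intro h
    have h1 : (p:ℤ) ∣ (432 : ℤ) := (dvd_neg.mp h)
    have h2 : p ∣ (432 : ℕ) := by exact_mod_cast h1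
    have h3 : p ∣ 16 * 27 := by norm_num at h2 ⊢; exact h2
    rcases (Nat.Prime.dvd_mul hp).mp h3 with h4 | h4
    · have h5 : p ∣ 2^4 := by norm_num at h4 ⊢; exact h4
      have h6 : p ∣ 2 := Nat.Prime.dvd_of_dvd_pow hp h5
      have := Nat.le_of_dvd (by norm_num) h6
      omega
    · have h5 : p ∣ 3^3 := by norm_num at h4 ⊢; exact h4
      have h6 : p ∣ 3 := Nat.Prime.dvd_of_dvd_pow hp h5
      have := Nat.le_of_dvd (by norm_num) h6
      omega
  have hVc : V p (-432 * (m:ℚ)^2) = 0 := by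
    have hrw : (-432 * (m:ℚ)^2) = ((-432 : ℤ):ℚ) * ((m:ℤ):ℚ)^2 := by push_cast; ring
    rw [hrw, V_mul (by norm_num) (pow_ne_zero _ hmq), V_pow hmq 2,
      V_int_zero h432, V_int_zero hpm]
    ring
  -- part (b)
  have h3nv : V p ((A (3*n):ℚ)/(B (3*n):ℚ)^2) = -2 * V p ((A n:ℚ)/(B n:ℚ)^2) :=
    H.triple hVc (by omega) htpos
  have h3nD : V p ((A (3*n):ℚ)/(B (3*n):ℚ)^2) < 0 := by omega
  have hbgoal : (p:ℤ) ∣ B (3*n) := hdneg' (3*n) (by omega) h3nD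
  refine ⟨hpm, hbgoal, ?_⟩
  -- part (c)
  intro r hr1 hr3 hpBr
  have hrD : V p ((A r:ℚ)/(B r:ℚ)^2) < 0 := hdneg r hr1 hpBr
  have hex : ∃ k, 1 ≤ k ∧ V p ((A k:ℚ)/(B k:ℚ)^2) < 0 := ⟨r, hr1, hrD⟩
  have hspec := Nat.find_spec hex
  have hNr' : Nat.find hex ≤ r := Nat.find_le ⟨hr1, hrD⟩
  set N := Nat.find hex with hNdef
  obtain ⟨hN1, hND⟩ := hspec
  have hmin : ∀ k : ℕ, 1 ≤ k → k < N → ¬ V p ((A k:ℚ)/(B k:ℚ)^2) < 0 := by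
    intro k hk hkN hneg
    exact Nat.find_min hex hkN ⟨hk, hneg⟩
  have hNr : N ≤ r := hNr'
  have hdd := H.Ddvd hN1 hmin hND
  have hN3n : N ∣ 3*n := hdd (3*n) (by omega) h3nD
  have hNn : ¬ N ∣ n := by
    intro hdvdn
    have h1 : 1 ≤ n / N := Nat.div_pos (Nat.le_of_dvd (by omega) hdvdn) (by omega)
    have h2 : V p ((A ((n/N)*N):ℚ)/(B ((n/N)*N):ℚ)^2) < 0 :=
      H.Dmult hN1 hND (n/N) h1
    rw [Nat.div_mul_cancel hdvdn] at h2
    omega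
  obtain ⟨hN3g, hgn⟩ := gcd3 (by omega) (by omega) hN3n hNn
  have hg1 : 1 ≤ N.gcd n := Nat.gcd_pos_of_pos_left n (by omega)
  have hgD : ¬ V p ((A (N.gcd n):ℚ)/(B (N.gcd n):ℚ)^2) < 0 := by
    intro h
    have h1 := hdd (N.gcd n) hg1 h
    have h2 := Nat.le_of_dvd (by omega) h1
    omega
  have h2gD : ¬ V p ((A (2*(N.gcd n)):ℚ)/(B (2*(N.gcd n)):ℚ)^2) < 0 := by
    intro h
    have h1 := hdd (2*(N.gcd n)) (by omega) h
    have h2 := Nat.le_of_dvd (by omega) h1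
    omega
  have h3gD : V p ((A (3*(N.gcd n)):ℚ)/(B (3*(N.gcd n)):ℚ)^2) < 0 := by
    rw [hN3g] at hND
    exact hND
  rcases Classical.em (1 ≤ V p ((A (N.gcd n):ℚ)/(B (N.gcd n):ℚ)^2)) with hgpos | hgpos
  · have hpAg : (p:ℤ) ∣ A (N.gcd n) := hdpos' (N.gcd n) hg1 hgpos
    have hgle : N.gcd n ≤ n := Nat.le_of_dvd (by omega) hgn
    rcases eq_or_lt_of_le hgle with hge | hgl
    · omega
    · exact hprim (N.gcd n) hg1 hgl hpAg
  · have hg0 : V p ((A (N.gcd n):ℚ)/(B (N.gcd n):ℚ)^2) = 0 := by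
      push_neg at hgpos
      omega
    have hC := H.claimC hVc hg1 h3gD h2gD hg0 (n / (N.gcd n))
      (Nat.div_pos (Nat.le_of_dvd (by omega) hgn) (by omega))
    have hC' : V p ((A ((n/(N.gcd n))*(N.gcd n)):ℚ)/(B ((n/(N.gcd n))*(N.gcd n)):ℚ)^2) < 0 ∨
        (V p ((A ((n/(N.gcd n))*(N.gcd n)):ℚ)/(B ((n/(N.gcd n))*(N.gcd n)):ℚ)^2) = 0 ∧
          ((A ((n/(N.gcd n))*(N.gcd n)):ℚ)/(B ((n/(N.gcd n))*(N.gcd n)):ℚ)^2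
              - (A (N.gcd n):ℚ)/(B (N.gcd n):ℚ)^2 = 0 ∨
            1 ≤ V p ((A ((n/(N.gcd n))*(N.gcd n)):ℚ)/(B ((n/(N.gcd n))*(N.gcd n)):ℚ)^2
              - (A (N.gcd n):ℚ)/(B (N.gcd n):ℚ)^2))) := hC
    rw [Nat.div_mul_cancel hgn] at hC'
    rcases hC' with h1 | ⟨h1, -⟩ <;> omega
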